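/- arXiv:1310.4625 — 7 statements merged into one kernel-verified Lean document; each statement's English description precedes it below -/
import Mathlib

section
/- Let A be an abelian group and let φ and ψ be inertial endomorphisms of A. Then φ + ψ and φ ∘ ψ are inertial endomorphisms of A; moreover every endomorphism of A whose image is finite is inertial. (Hence the inertial endomorphisms form a subring IE(A) of the endomorphism ring of A, containing the ideal F(A) of endomorphisms with finite image.) -/
/-- An endomorphism `φ` of an abelian group `A` is *inertial* (RIN) if every subgroup `X`
of `A` has finite index in `X + φ(X)`. -/
def IsInertial {A : Type*} [AddCommGroup A] (φ : A →+ A) : Prop :=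
  ∀ X : AddSubgroup A, X.relIndex (X ⊔ X.map φ) ≠ 0

/-- If `X` has finite relative index in `L` and `X ≤ K ≤ L`, then `X` has finite
relative index in `K`. -/
lemma relindex_ne_zero_of_le {A : Type*} [AddCommGroup A] {X K L : AddSubgroup A}
    (hXK : X ≤ K) (hKL : K ≤ L) (h : X.relIndex L ≠ 0) : X.relIndex K ≠ 0 := by
  intro h0
  rw [← AddSubgroup.relIndex_mul_relIndex X K L hXK hKL, h0, zero_mul] at h
  exact h rfl

/-- Sums and composites of inertial endomorphisms are inertial, and any endomorphism with
finite image is inertial. -/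
theorem stmt_0 {A : Type*} [AddCommGroup A] (φ ψ : A →+ A)
    (hφ : IsInertial φ) (hψ : IsInertial ψ) :
    IsInertial (φ + ψ) ∧ IsInertial (φ.comp ψ) ∧
      ∀ χ : A →+ A, (Set.range χ).Finite → IsInertial χ := by
  refine ⟨?_, ?_, ?_⟩
  · -- sum
    intro X
    set K := X ⊔ X.map φ with hK
    set L := K ⊔ (X ⊔ X.map ψ) with hL
    have hXK : X ≤ K := le_sup_left
    have hKL : K ≤ L := le_sup_left
    have h2 : K.relIndex L ≠ 0 := by
      rw [hL, sup_comm, AddSubgroup.relIndex_sup_right]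
      intro h0
      exact hψ X (Nat.eq_zero_of_zero_dvd (h0 ▸ AddSubgroup.relIndex_dvd_of_le_left _ hXK))
    have hXL : X.relIndex L ≠ 0 := by
      rw [← AddSubgroup.relIndex_mul_relIndex X K L hXK hKL]
      exact Nat.mul_ne_zero (hφ X) h2
    have hsub : X ⊔ X.map (φ + ψ) ≤ L := by
      refine sup_le (hXK.trans hKL) ?_
      rintro _ ⟨x, hx, rfl⟩
      have : (φ + ψ) x = φ x + ψ x := rfl
      rw [this]
      exact AddSubgroup.add_mem _
        (hKL (AddSubgroup.mem_sup_right (AddSubgroup.mem_map_of_mem φ hx)))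
        (AddSubgroup.mem_sup_right (AddSubgroup.mem_sup_right (AddSubgroup.mem_map_of_mem ψ hx)))
    exact relindex_ne_zero_of_le le_sup_left hsub hXL
  · -- composition
    intro X
    set Y := X ⊔ X.map ψ with hY
    set L := Y ⊔ Y.map φ with hL
    have hXY : X ≤ Y := le_sup_left
    have hYL : Y ≤ L := le_sup_left
    have hXL : X.relIndex L ≠ 0 := by
      rw [← AddSubgroup.relIndex_mul_relIndex X Y L hXY hYL]
      exact Nat.mul_ne_zero (hψ X) (hφ Y)
    have hsub : X ⊔ X.map (φ.comp ψ) ≤ L := by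
      refine sup_le (hXY.trans hYL) ?_
      rintro _ ⟨x, hx, rfl⟩
      exact AddSubgroup.mem_sup_right
        (AddSubgroup.mem_map_of_mem φ (AddSubgroup.mem_sup_right (AddSubgroup.mem_map_of_mem ψ hx)))
    exact relindex_ne_zero_of_le le_sup_left hsub hXL
  · -- finite image
    intro χ hfin X
    rw [sup_comm, AddSubgroup.relIndex_sup_right]
    have : Finite (X.map χ) := by
      have : (X.map χ : Set A) ⊆ Set.range χ := by
        rintro _ ⟨x, _, rfl⟩; exact ⟨x, rfl⟩
      exact Set.Finite.subset hfin this
    rw [AddSubgroup.relIndex]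
    exact AddSubgroup.index_ne_zero_of_finite
end

section
/- There exists a countable abelian group A of torsion-free rank 1 (i.e. ℚ ⊗_ℤ A is a 1-dimensional ℚ-vector space) such that the subgroup IAut(A) of Aut(A) generated by the inertial automorphisms of A contains a subgroup Σ isomorphic to the direct product ∏_p ℤ/pℤ over all primes p, with Σ ∩ FAut(A) equal to the torsion subgroup of Σ, which is isomorphic to the direct sum ⊕_p ℤ/pℤ over all primes p. -/
open scoped TensorProduct

/-- An automorphism of an abelian group `A` is *finitary* if it agrees with the identity
on some subgroup of finite index of `A`. -/
def IsFinitary {A : Type*} [AddCommGroup A] (ψ : AddAut A) : Prop :=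
  ∃ B : AddSubgroup A, B.index ≠ 0 ∧ ∀ a ∈ B, ψ a = a

/-- `A` is countable, has torsion-free rank `1`, and the subgroup `IAut(A)` of `Aut(A)`
generated by the inertial automorphisms contains a subgroup `S ≅ ∏_p ℤ/pℤ` whose
intersection with `FAut(A)` is its torsion subgroup, which corresponds under the
isomorphism to the finitely supported elements, i.e. to `⊕_p ℤ/pℤ`. -/
def Stmt6Prop (A : Type) [AddCommGroup A] : Prop :=
  Countable A ∧ Module.finrank ℚ (ℚ ⊗[ℤ] A) = 1 ∧
  ∃ S : AddSubgroup (AddAut A),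
    S ≤ AddSubgroup.closure {ψ : AddAut A | IsInertial ψ.toAddMonoidHom} ∧
    ∃ e : ↥S ≃+ (∀ p : Nat.Primes, ZMod (p : ℕ)),
      (∀ g : ↥S, IsFinitary (g : AddAut A) ↔ IsOfFinAddOrder (g : AddAut A)) ∧
      (∀ g : ↥S, IsOfFinAddOrder (g : AddAut A) ↔ {p : Nat.Primes | e g p ≠ 0}.Finite)

namespace Stmt6Aux

abbrev T (p : Nat.Primes) : Type := ZMod ((p : ℕ) ^ 2)

instance (p : Nat.Primes) : Fact ((p:ℕ)).Prime := ⟨p.2⟩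
instance (p : Nat.Primes) : NeZero ((p:ℕ)^2) := ⟨pow_ne_zero _ p.2.pos.ne'⟩

lemma psq (p : Nat.Primes) : (((p:ℕ) : T p))^2 = 0 := by
  rw [← Nat.cast_pow, ZMod.natCast_self]

/-- the unit `1 + p` of `ZMod p²`. -/
def u (p : Nat.Primes) : (T p)ˣ :=
  ⟨1 + ((p:ℕ) : T p), 1 - ((p:ℕ) : T p), by linear_combination -psq p, by linear_combination -psq p⟩

lemma u_val_pow (p : Nat.Primes) (k : ℕ) :
    ((u p ^ k : (T p)ˣ) : T p) = 1 + (k : T p) * ((p:ℕ) : T p) := by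
  induction k with
  | zero => simp
  | succ k ih =>
    have h1 : ((u p ^ (k+1) : (T p)ˣ) : T p) = ((u p ^ k : (T p)ˣ) : T p) * ((u p : (T p)ˣ) : T p) :=
      (congrArg Units.val (pow_succ (u p) k)).trans (Units.val_mul _ _)
    have hu : ((u p : (T p)ˣ) : T p) = 1 + ((p:ℕ) : T p) := rfl
    rw [h1, ih, hu]
    push_cast
    linear_combination (k : T p) * psq p

lemma u_pow_eq_one_iff (p : Nat.Primes) (k : ℕ) : u p ^ k = 1 ↔ (p:ℕ) ∣ k := by
  rw [Units.ext_iff, u_val_pow, Units.val_one]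
  constructor
  · intro h
    have h' : ((k * (p:ℕ) : ℕ) : T p) = 0 := by
      push_cast
      linear_combination h
    rw [ZMod.natCast_eq_zero_iff] at h'
    have := (pow_two (p:ℕ)) ▸ h'
    exact (Nat.mul_dvd_mul_iff_right p.2.pos).mp this
  · rintro ⟨j, rfl⟩
    have h : (((p:ℕ) * j : ℕ) : T p) * ((p:ℕ) : T p) = 0 := by
      push_cast
      linear_combination (j : T p) * psq p
    rw [h, add_zero]

lemma u_ne_one (p : Nat.Primes) : u p ≠ 1 := by
  intro h
  have := (u_pow_eq_one_iff p 1).mp (by simpa using h)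
  exact absurd (Nat.le_of_dvd one_pos this) (by have := p.2.two_le; omega)

lemma orderOf_u (p : Nat.Primes) : orderOf (u p) = (p:ℕ) :=
  orderOf_eq_prime ((u_pow_eq_one_iff p _).mpr dvd_rfl) (u_ne_one p)

/-- the character `ZMod p → (ZMod p²)ˣ`, `k ↦ (1+p)^k`. -/
def zeta (p : Nat.Primes) : Multiplicative (ZMod (p:ℕ)) →* (T p)ˣ where
  toFun x := u p ^ (Multiplicative.toAdd x).val
  map_one' := by simp
  map_mul' x y := by
    rw [← pow_add]
    rw [pow_eq_pow_iff_modEq, orderOf_u]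
    rw [toAdd_mul, ZMod.val_add]
    exact Nat.mod_modEq _ _

lemma zeta_injective (p : Nat.Primes) : Function.Injective (zeta p) := by
  intro x y h
  have h' : u p ^ (Multiplicative.toAdd x).val = u p ^ (Multiplicative.toAdd y).val := h
  rw [pow_eq_pow_iff_modEq, orderOf_u] at h'
  have := h'.eq_of_lt_of_lt (ZMod.val_lt _) (ZMod.val_lt _)
  exact (Multiplicative.toAdd).injective (ZMod.val_injective _ this)

lemma zeta_eq_one_iff (p : Nat.Primes) (x : Multiplicative (ZMod (p:ℕ))) :
    zeta p x = 1 ↔ x = 1 := by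
  constructor
  · intro h; exact zeta_injective p (h.trans (map_one (zeta p)).symm)
  · rintro rfl; exact map_one _

abbrev D : Type := Π₀ p : Nat.Primes, T p
abbrev A : Type := ℤ × D

/-- the automorphism of `D` given componentwise by multiplication by `zeta p (c p)`. -/
def psi (c : ∀ p : Nat.Primes, Multiplicative (ZMod (p:ℕ))) : D ≃+ D :=
  DFinsupp.mapRange.addEquiv fun p =>
    (DistribMulAction.toAddAut ((T p)ˣ) (T p) (zeta p (c p)) : T p ≃+ T p)

lemma psi_apply (c : ∀ p : Nat.Primes, Multiplicative (ZMod (p:ℕ))) (f : D) (q : Nat.Primes) :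
    psi c f q = ((zeta q (c q) : (T q)ˣ) : T q) * f q := by
  change DFinsupp.mapRange (fun p x => (DistribMulAction.toAddAut ((T p)ˣ) (T p) (zeta p (c p)) x))
    (fun p => map_zero _) f q = _
  rw [DFinsupp.mapRange_apply]
  exact Units.smul_def (zeta q (c q)) (f q)

/-- the monoid hom `∏_p ZMod p →* Aut(ℤ × D)`. -/
def PhiM : (∀ p : Nat.Primes, Multiplicative (ZMod (p:ℕ))) →* Multiplicative (AddAut A) where
  toFun c := Multiplicative.ofAdd (AddEquiv.prodCongr (AddEquiv.refl ℤ) (psi c))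
  map_one' := by
    show AddEquiv.prodCongr (AddEquiv.refl ℤ) (psi 1) = AddEquiv.refl A
    apply AddEquiv.ext
    rintro ⟨n, f⟩
    refine Prod.ext rfl ?_
    show psi 1 f = f
    ext q
    simp [psi_apply]
  map_mul' c d := by
    show AddEquiv.prodCongr (AddEquiv.refl ℤ) (psi (c * d)) =
      AddEquiv.prodCongr (AddEquiv.refl ℤ) (psi c) + AddEquiv.prodCongr (AddEquiv.refl ℤ) (psi d)
    apply AddEquiv.ext
    rintro ⟨n, f⟩
    refine Prod.ext rfl ?_
    show psi (c * d) f = psi c (psi d f)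
    ext q
    simp [psi_apply, mul_assoc]

def Phi (c : ∀ p : Nat.Primes, Multiplicative (ZMod (p:ℕ))) : AddAut A :=
  Multiplicative.toAdd (PhiM c)

lemma Phi_apply (c : ∀ p : Nat.Primes, Multiplicative (ZMod (p:ℕ))) (x : A) :
    Phi c x = (x.1, psi c x.2) := rfl

lemma Phi_injective : Function.Injective Phi := by
  intro c d h
  funext p
  apply zeta_injective p
  apply Units.ext
  have h2 := congrArg (fun (e : AddAut A) => (e (0, DFinsupp.single p 1)).2 p) h
  simpa [Phi_apply, psi_apply] using h2

lemma PhiM_injective : Function.Injective PhiM :=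
  fun _ _ h => Phi_injective (congrArg Multiplicative.toAdd h)

def PhiA : (∀ p : Nat.Primes, ZMod (p:ℕ)) →+ AddAut A where
  toFun c := Phi (fun p => Multiplicative.ofAdd (c p))
  map_zero' := congrArg Multiplicative.toAdd PhiM.map_one
  map_add' c d := congrArg Multiplicative.toAdd (PhiM.map_mul _ _)

lemma PhiA_injective : Function.Injective PhiA := by
  intro c d h
  funext p
  exact Multiplicative.ofAdd.injective (congrFun (Phi_injective h) p)

lemma exists_nsmul (c : ∀ p : Nat.Primes, Multiplicative (ZMod (p:ℕ))) (f : D) :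
    ∃ N : ℕ, psi c f = N • f := by
  classical
  set s := f.support with hs
  set a : ↥s → ℕ := fun i => ((i : Nat.Primes) : ℕ) ^ 2 with ha
  have hcop : Pairwise (Function.onFun Nat.Coprime a) := by
    intro i j hij
    have hne : ((i : Nat.Primes) : ℕ) ≠ ((j : Nat.Primes) : ℕ) := by
      intro h'
      exact hij (Subtype.ext (Subtype.ext h'))
    show Nat.Coprime (a i) (a j)
    exact Nat.Coprime.pow _ _ ((Nat.coprime_primes (i:Nat.Primes).2 (j:Nat.Primes).2).mpr hne)
  haveI : NeZero (∏ i, a i) :=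
    ⟨Finset.prod_ne_zero_iff.mpr fun i _ => pow_ne_zero _ (i:Nat.Primes).2.pos.ne'⟩
  let χ := ZMod.prodEquivPi a hcop
  let t : ∀ i : ↥s, ZMod (a i) := fun i => ((zeta i (c i) : (T (i:Nat.Primes))ˣ) : T (i:Nat.Primes))
  set N : ℕ := (χ.symm t).val with hN
  have key : ∀ i : ↥s, ((N : ZMod (a i))) = t i := by
    intro i
    have hdvd : a i ∣ ∏ j, a j := Finset.dvd_prod_of_mem a (Finset.mem_univ i)
    have h1 : (ZMod.castHom hdvd (ZMod (a i))) = (Pi.evalRingHom _ i).comp χ.toRingHom :=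
      RingHom.ext_zmod _ _
    have h2 : ((N : ZMod (a i))) = (ZMod.castHom hdvd (ZMod (a i))) (χ.symm t) := by
      rw [hN, ZMod.castHom_apply, ZMod.natCast_val]
    rw [h2, h1]
    show χ (χ.symm t) i = t i
    rw [χ.apply_symm_apply]
  refine ⟨N, ?_⟩
  ext q
  rw [psi_apply, DFinsupp.smul_apply]
  by_cases hq : q ∈ s
  · have := key ⟨q, hq⟩
    have h3 : ((N : T q)) = ((zeta q (c q) : (T q)ˣ) : T q) := this
    rw [nsmul_eq_mul, ← h3]
  · have : f q = 0 := DFinsupp.notMem_support_iff.mp hq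
    rw [this, mul_zero, smul_zero]

lemma D_torsion (f : D) : ∃ m : ℕ, m ≠ 0 ∧ m • f = 0 := by
  classical
  refine ⟨∏ p ∈ f.support, ((p:ℕ))^2, Finset.prod_ne_zero_iff.mpr
    fun i _ => pow_ne_zero _ i.2.pos.ne', ?_⟩
  ext q
  rw [DFinsupp.smul_apply, DFinsupp.zero_apply]
  by_cases hq : q ∈ f.support
  · have hdvd : ((q:ℕ))^2 ∣ ∏ p ∈ f.support, ((p:ℕ))^2 :=
      Finset.dvd_prod_of_mem _ hq
    rw [nsmul_eq_mul]
    have : ((∏ p ∈ f.support, ((p:ℕ))^2 : ℕ) : T q) = 0 := by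
      rw [ZMod.natCast_eq_zero_iff]
      exact hdvd
    rw [this, zero_mul]
  · rw [DFinsupp.notMem_support_iff.mp hq, smul_zero]

/-- The statement's definition, restated. -/
lemma nsmul_of_fst_eq_zero (c : ∀ p : Nat.Primes, Multiplicative (ZMod (p:ℕ)))
    (x : A) (hx : x.1 = 0) : ∃ N : ℕ, Phi c x = N • x := by
  obtain ⟨N, hN⟩ := exists_nsmul c x.2
  refine ⟨N, ?_⟩
  rw [Phi_apply, hN]
  refine Prod.ext ?_ rfl
  simp [hx]

lemma phi_inertial (c : ∀ p : Nat.Primes, Multiplicative (ZMod (p:ℕ))) :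
    ∀ X : AddSubgroup A, X.relIndex (X ⊔ X.map (Phi c).toAddMonoidHom) ≠ 0 := by
  intro X
  haveI := X.normal_of_isAddCommutative
  set φ := (Phi c).toAddMonoidHom with hφ
  have hφx : ∀ x : A, φ x = Phi c x := fun _ => rfl
  have C0 : ∀ x ∈ X, x.1 = 0 → φ x ∈ X := by
    intro x hx h0
    obtain ⟨N, hN⟩ := nsmul_of_fst_eq_zero c x h0
    rw [hφx, hN]
    exact X.nsmul_mem hx N
  by_cases hX : ∀ x ∈ X, (x : A).1 = 0
  · have hle : X.map φ ≤ X := by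
      rintro _ ⟨x, hx, rfl⟩
      exact C0 x hx (hX x hx)
    rw [sup_of_le_left hle, AddSubgroup.relIndex_self]
    exact one_ne_zero
  · push_neg at hX
    obtain ⟨x₁, hx₁X, hx₁⟩ := hX
    obtain ⟨g, hg⟩ := Int.subgroup_cyclic (X.map (AddMonoidHom.fst ℤ D))
    have hmem : ∀ x ∈ X, ∃ k : ℤ, x.1 = k • g := by
      intro x hx
      have : x.1 ∈ X.map (AddMonoidHom.fst ℤ D) := ⟨x, hx, rfl⟩
      rw [hg, ← AddSubgroup.zmultiples_eq_closure] at this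
      obtain ⟨k, hk⟩ := AddSubgroup.mem_zmultiples_iff.mp this
      exact ⟨k, hk.symm⟩
    have hgmem : g ∈ X.map (AddMonoidHom.fst ℤ D) := by
      rw [hg]; exact AddSubgroup.mem_closure_singleton_self g
    obtain ⟨x₀, hx₀X, hx₀⟩ := hgmem
    have hx₀' : x₀.1 = g := hx₀
    set a : A := φ x₀ - x₀ with haa
    have ha1 : a.1 = 0 := by simp [haa, hφx, Phi_apply]
    -- a has finite order
    have hfin : IsOfFinAddOrder a := by
      obtain ⟨m, hm, hma⟩ := D_torsion a.2
      refine isOfFinAddOrder_iff_nsmul_eq_zero.mpr ⟨m, Nat.pos_of_ne_zero hm, ?_⟩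
      refine Prod.ext ?_ ?_
      · show m • a.1 = 0; rw [ha1, smul_zero]
      · exact hma
    set Z := AddSubgroup.zmultiples a with hZ
    haveI : Finite ↥Z := hfin.finite_zmultiples.to_subtype
    set K := X ⊔ Z with hK
    have hmap : X.map φ ≤ K := by
      rintro _ ⟨x, hx, rfl⟩
      obtain ⟨k, hk⟩ := hmem x hx
      have hy : x - k • x₀ ∈ X := X.sub_mem hx (X.zsmul_mem hx₀X k)
      have hy1 : (x - k • x₀).1 = 0 := by
        have : (x - k • x₀).1 = x.1 - k • x₀.1 := rfl
        rw [this, hx₀', hk, sub_self]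
      have h1 : φ x = φ (x - k • x₀) + k • (x₀ + a) := by
        rw [haa]
        rw [map_sub, map_zsmul]
        simp only [smul_add, smul_sub]
        abel
      rw [h1]
      have h2 : φ (x - k • x₀) ∈ K := le_sup_left (α := AddSubgroup A) (C0 _ hy hy1)
      have h3 : k • (x₀ + a) ∈ K := by
        refine K.zsmul_mem (K.add_mem ?_ ?_) k
        · exact le_sup_left (α := AddSubgroup A) hx₀X
        · exact le_sup_right (α := AddSubgroup A) (AddSubgroup.mem_zmultiples a)
      exact K.add_mem h2 h3
    have hsup : X ⊔ X.map φ ≤ K := sup_le le_sup_left hmap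
    have hXK : X.relIndex K ≠ 0 := by
      rw [hK, AddSubgroup.relIndex_sup_left]
      exact fun h => AddSubgroup.index_ne_zero_of_finite (H := X.addSubgroupOf Z) h
    intro h0
    apply hXK
    rw [← AddSubgroup.relIndex_mul_relIndex X (X ⊔ X.map φ) K le_sup_left hsup, h0, zero_mul]

/-- primes with value ≤ n form a finite set -/
lemma primes_le_finite (n : ℕ) : {p : Nat.Primes | (p:ℕ) ≤ n}.Finite := by
  have : {p : Nat.Primes | (p:ℕ) ≤ n} ⊆ (fun p : Nat.Primes => (p:ℕ)) ⁻¹' (Set.Iic n) := by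
    intro p hp; exact hp
  refine Set.Finite.subset (Set.Finite.preimage ?_ (Set.finite_Iic n)) this
  exact fun x _ y _ h => Subtype.ext h

lemma single_mem_pow (p : Nat.Primes) (x : Multiplicative (ZMod (p:ℕ))) :
    x ^ (p:ℕ) = 1 := by
  have : (p:ℕ) • (Multiplicative.toAdd x) = 0 := by
    rw [nsmul_eq_mul, ZMod.natCast_self, zero_mul]
  have h2 : Multiplicative.toAdd (x ^ (p:ℕ)) = Multiplicative.toAdd 1 := by
    rw [toAdd_pow, this]; rfl
  exact Multiplicative.toAdd.injective h2

lemma finorder_iff (c : ∀ p : Nat.Primes, Multiplicative (ZMod (p:ℕ))) :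
    IsOfFinAddOrder (Phi c) ↔ {p : Nat.Primes | c p ≠ 1}.Finite := by
  have horder : IsOfFinAddOrder (Phi c) ↔ IsOfFinOrder c := by
    rw [← isOfFinOrder_ofAdd_iff]
    show IsOfFinOrder (PhiM c) ↔ _
    rw [← orderOf_pos_iff, ← orderOf_pos_iff, orderOf_injective PhiM PhiM_injective]
  rw [horder]
  constructor
  · intro h
    obtain ⟨m, hm, hcm⟩ := isOfFinOrder_iff_pow_eq_one.mp h
    have hsub : {p : Nat.Primes | c p ≠ 1} ⊆ {p : Nat.Primes | (p:ℕ) ≤ m} := by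
      intro p hp
      have hpm : (c p) ^ m = 1 := congrFun hcm p
      -- deduce p ∣ m
      have : (m : ZMod (p:ℕ)) • (Multiplicative.toAdd (c p)) = 0 := by
        have h2 : Multiplicative.toAdd ((c p) ^ m) = m • Multiplicative.toAdd (c p) := toAdd_pow _ _
        rw [hpm] at h2
        rw [smul_eq_mul, ← nsmul_eq_mul]
        exact h2.symm
      have hx : Multiplicative.toAdd (c p) ≠ 0 := fun h0 => hp (Multiplicative.toAdd.injective h0)
      have hm0 : (m : ZMod (p:ℕ)) = 0 := by
        rcases mul_eq_zero.mp (by rw [smul_eq_mul] at this; exact this) with h | h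
        · exact h
        · exact absurd h hx
      have hdvd : (p:ℕ) ∣ m := (ZMod.natCast_eq_zero_iff m (p:ℕ)).mp hm0
      exact Set.mem_setOf_eq ▸ Nat.le_of_dvd hm hdvd
    exact (primes_le_finite m).subset hsub
  · intro hF
    rw [isOfFinOrder_iff_pow_eq_one]
    classical
    refine ⟨∏ p ∈ hF.toFinset, (p:ℕ), ?_, ?_⟩
    · exact Nat.pos_of_ne_zero (Finset.prod_ne_zero_iff.mpr fun i _ => i.2.pos.ne')
    · funext p
      show (c p) ^ _ = 1
      by_cases hp : c p = 1
      · rw [hp, one_pow]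
      · have hpmem : p ∈ hF.toFinset := by rw [Set.Finite.mem_toFinset]; exact hp
        obtain ⟨j, hj⟩ := Finset.dvd_prod_of_mem (fun p : Nat.Primes => (p:ℕ)) hpmem
        rw [hj, pow_mul, single_mem_pow, one_pow]

lemma finitary_iff (c : ∀ p : Nat.Primes, Multiplicative (ZMod (p:ℕ))) :
    (∃ B : AddSubgroup A, B.index ≠ 0 ∧ ∀ a ∈ B, Phi c a = a) ↔
      {p : Nat.Primes | c p ≠ 1}.Finite := by
  classical
  constructor
  · rintro ⟨B, hB, hid⟩
    haveI := B.normal_of_isAddCommutative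
    by_contra hinf
    replace hinf : {p : Nat.Primes | c p ≠ 1}.Infinite := hinf
    obtain ⟨p, hp, hpn⟩ : ∃ p : Nat.Primes, c p ≠ 1 ∧ B.index < (p:ℕ) := by
      have := (hinf.diff (primes_le_finite B.index)).nonempty
      obtain ⟨p, hp1, hp2⟩ := this
      exact ⟨p, hp1, by simpa using hp2⟩
    set x : A := (0, DFinsupp.single p 1) with hx
    have hmem : B.index • x ∈ B := B.nsmul_index_mem x
    have := congrArg (fun y : A => y.2 p) (hid _ hmem)
    simp only [Phi_apply] at this
    have h2 : ((B.index : ℕ) : T p) * ((zeta p (c p) : (T p)ˣ) : T p) = ((B.index : ℕ) : T p) := by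
      simpa [psi_apply, hx, Prod.smul_def, DFinsupp.smul_apply, nsmul_eq_mul, mul_comm] using this
    have hu : IsUnit ((B.index : ℕ) : T p) := by
      rw [ZMod.isUnit_iff_coprime]
      have hnd : ¬ (p:ℕ) ∣ B.index := fun hd => absurd (Nat.le_of_dvd (Nat.pos_of_ne_zero hB) hd) (by omega)
      exact Nat.Coprime.pow_right _ ((Nat.Prime.coprime_iff_not_dvd p.2).mpr hnd).symm
    have h3 : ((zeta p (c p) : (T p)ˣ) : T p) = 1 :=
      hu.mul_left_cancel (h2.trans (mul_one _).symm)
    exact hp ((zeta_eq_one_iff p (c p)).mp (Units.ext h3))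
  · intro hF
    set F := hF.toFinset with hFdef
    set ρ : A →+ (∀ p : F, T p) :=
      { toFun := fun x (p : F) => x.2 (p : Nat.Primes)
        map_zero' := by funext p; simp
        map_add' := by intro x y; funext p; simp } with hρ
    refine ⟨ρ.ker, ?_, ?_⟩
    · rw [AddSubgroup.index_ker]
      exact Nat.card_ne_zero.mpr ⟨⟨0, AddSubgroup.zero_mem _⟩, inferInstance⟩
    · intro x hx
      have hker : ∀ p : F, x.2 (p : Nat.Primes) = 0 := fun p => congrFun hx p
      rw [Phi_apply]
      refine Prod.ext rfl ?_
      ext q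
      rw [psi_apply]
      by_cases hq : c q = 1
      · rw [hq]
        simp
      · have hqF : q ∈ F := by rw [hFdef, Set.Finite.mem_toFinset]; exact hq
        rw [hker ⟨q, hqF⟩, mul_zero]

open scoped TensorProduct in
lemma tensor_eq_zero (x : ℚ ⊗[ℤ] D) : x = 0 := by
  induction x using TensorProduct.induction_on with
  | zero => rfl
  | tmul q d =>
    obtain ⟨m, hm, hmd⟩ := D_torsion d
    have h1 : (m : ℤ) • (((m:ℚ))⁻¹ * q) = q := by
      rw [zsmul_eq_mul]
      push_cast
      have : (m : ℚ) ≠ 0 := Nat.cast_ne_zero.mpr hm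
      field_simp
    calc q ⊗ₜ[ℤ] d = ((m:ℤ) • (((m:ℚ))⁻¹ * q)) ⊗ₜ[ℤ] d := by rw [h1]
    _ = (((m:ℚ))⁻¹ * q) ⊗ₜ[ℤ] ((m:ℤ) • d) := TensorProduct.smul_tmul _ _ _
    _ = 0 := by rw [natCast_zsmul, hmd, TensorProduct.tmul_zero]
  | add x y hx hy => rw [hx, hy, add_zero]

open scoped TensorProduct in
lemma finrank_one : Module.finrank ℚ (ℚ ⊗[ℤ] A) = 1 := by
  haveI : Subsingleton (ℚ ⊗[ℤ] D) := ⟨fun x y => (tensor_eq_zero x).trans (tensor_eq_zero y).symm⟩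
  let e1 : (ℚ ⊗[ℤ] A) ≃+ (ℚ ⊗[ℤ] ℤ) × (ℚ ⊗[ℤ] D) :=
    (TensorProduct.prodRight ℤ ℚ ℚ ℤ D).toAddEquiv
  let e2 : (ℚ ⊗[ℤ] ℤ) × (ℚ ⊗[ℤ] D) ≃+ ℚ × (ℚ ⊗[ℤ] D) :=
    AddEquiv.prodCongr (TensorProduct.rid ℤ ℚ).toAddEquiv (AddEquiv.refl _)
  let e3 : ℚ × (ℚ ⊗[ℤ] D) ≃+ ℚ :=
    { toFun := Prod.fst
      invFun := fun q => (q, 0)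
      left_inv := fun x => Prod.ext rfl (Subsingleton.elim _ _)
      right_inv := fun q => rfl
      map_add' := fun _ _ => rfl }
  let E : (ℚ ⊗[ℤ] A) ≃+ ℚ := e1.trans (e2.trans e3)
  let EL : (ℚ ⊗[ℤ] A) ≃ₗ[ℚ] ℚ := AddEquiv.toLinearEquiv E (fun c x => map_rat_smul E c x)
  rw [EL.finrank_eq, Module.finrank_self]

lemma countable_A : Countable A := inferInstance

end Stmt6Aux


/-- There exists a countable abelian group of torsion-free rank `1` with the properties
described in `Stmt6Prop`. -/
theorem stmt_6 : ∃ (A : Type) (inst : AddCommGroup A), @Stmt6Prop A inst := by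
  classical
  refine ⟨Stmt6Aux.A, inferInstance, Stmt6Aux.countable_A, Stmt6Aux.finrank_one, ?_⟩
  refine ⟨Stmt6Aux.PhiA.range, ?_, (AddMonoidHom.ofInjective Stmt6Aux.PhiA_injective).symm, ?_, ?_⟩
  · rintro ψ hψ
    obtain ⟨c, rfl⟩ := hψ
    exact AddSubgroup.subset_closure (Stmt6Aux.phi_inertial _)
  · rintro ⟨ψ, hψ⟩
    obtain ⟨c, rfl⟩ := hψ
    show IsFinitary (Stmt6Aux.PhiA c) ↔ IsOfFinAddOrder (Stmt6Aux.PhiA c)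
    exact (Stmt6Aux.finitary_iff _).trans (Stmt6Aux.finorder_iff _).symm
  · rintro ⟨ψ, hψ⟩
    obtain ⟨c, hc⟩ := hψ
    have hmem : ψ ∈ Stmt6Aux.PhiA.range := ⟨c, hc⟩
    have he : (AddMonoidHom.ofInjective Stmt6Aux.PhiA_injective).symm ⟨ψ, hmem⟩ = c := by
      rw [AddEquiv.symm_apply_eq]
      have h2 : (((AddMonoidHom.ofInjective Stmt6Aux.PhiA_injective) c : Stmt6Aux.PhiA.range) : AddAut Stmt6Aux.A) = Stmt6Aux.PhiA c :=
        AddMonoidHom.ofInjective_apply Stmt6Aux.PhiA_injective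
      exact Subtype.ext (h2.trans hc).symm
    show IsOfFinAddOrder ψ ↔ _
    rw [he, ← hc]
    exact Stmt6Aux.finorder_iff _
end

section
/- Let A be an abelian group of infinite torsion-free rank (i.e. ℚ ⊗_ℤ A is an infinite-dimensional ℚ-vector space), let m and n be coprime integers with n ≠ 0 such that multiplication by n is bijective on A, and let φ be the endomorphism of A determined by n•φ(a) = m•a for all a ∈ A. Then φ is LIN if and only if m = 1 or m = −1. -/
open scoped TensorProduct

/-- An endomorphism `φ` of an abelian group `A` is *LIN* if for every subgroup `X`
of `A`, the intersection `X ∩ φ(X)` has finite index in `X`. -/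
def IsLIN {A : Type*} [AddCommGroup A] (φ : A →+ A) : Prop :=
  ∀ X : AddSubgroup A, (X.map φ).relIndex X ≠ 0

/-- On an abelian group of infinite torsion-free rank, multiplication by `m/n` is LIN
iff `m = 1` or `m = -1`. -/
theorem stmt_9 {A : Type*} [AddCommGroup A]
    (hA : ¬ FiniteDimensional ℚ (ℚ ⊗[ℤ] A)) (m n : ℤ)
    (hmn : IsCoprime m n) (hn : n ≠ 0)
    (hbij : Function.Bijective fun a : A => n • a)
    (φ : A →+ A) (hφ : ∀ a : A, n • φ a = m • a) :
    IsLIN φ ↔ (m = 1 ∨ m = -1) := by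
  constructor
  · intro hLIN
    by_contra hm
    push_neg at hm
    obtain ⟨hm1, hm2⟩ := hm
    -- the ℤ-linear map `a ↦ 1 ⊗ a`
    set V := ℚ ⊗[ℤ] A with hV
    let ι : A →ₗ[ℤ] V := TensorProduct.mk ℤ ℚ A 1
    have hspan : Submodule.span ℚ (Set.range fun a : A => ((1:ℚ) ⊗ₜ[ℤ] a : V)) = ⊤ := by
      rw [eq_top_iff]
      rintro x -
      induction x using TensorProduct.induction_on with
      | zero => exact Submodule.zero_mem _
      | tmul q a =>
        have : (q ⊗ₜ[ℤ] a : V) = q • ((1:ℚ) ⊗ₜ[ℤ] a) := by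
          rw [TensorProduct.smul_tmul', smul_eq_mul, mul_one]
        rw [this]
        exact Submodule.smul_mem _ _ (Submodule.subset_span ⟨a, rfl⟩)
      | add x y hx hy => exact Submodule.add_mem _ hx hy
    obtain ⟨t, hts, htspan, htli⟩ :=
      exists_linearIndependent ℚ (Set.range fun a : A => ((1:ℚ) ⊗ₜ[ℤ] a : V))
    rw [hspan] at htspan
    have htinf : t.Infinite := by
      intro hfin
      exact hA (Module.finite_def.mpr (Submodule.fg_def.mpr ⟨t, hfin, htspan⟩))
    have : Infinite t := htinf.to_subtype
    let e : ℕ ↪ t := Infinite.natEmbedding t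
    let w : ℕ → V := fun k => (e k : V)
    have hwli : LinearIndependent ℚ w := htli.comp e e.injective
    have hwliZ : LinearIndependent ℤ w := by
      refine hwli.restrict_scalars ?_
      intro r s h
      simpa using h
    have hwa : ∀ k, ∃ a : A, ((1:ℚ) ⊗ₜ[ℤ] a : V) = w k := fun k => hts (e k).2
    choose a ha using hwa
    have hιa : ∀ k, ι (a k) = w k := ha
    set X := AddSubgroup.closure (Set.range a) with hX
    have haX : ∀ k, a k ∈ X := fun k => AddSubgroup.subset_closure ⟨k, rfl⟩
    -- the quotient is finite
    have hfin : Finite (X ⧸ (X.map φ).addSubgroupOf X) := by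
      have h := hLIN X
      rw [AddSubgroup.relIndex, AddSubgroup.index] at h
      exact (Nat.card_ne_zero.mp h).2
    obtain ⟨i, j, hij, hg⟩ :=
      Finite.exists_ne_map_eq_of_infinite
        (fun k : ℕ => ((⟨a k, haX k⟩ : X) : X ⧸ (X.map φ).addSubgroupOf X))
    rw [QuotientAddGroup.eq] at hg
    rw [AddSubgroup.mem_addSubgroupOf] at hg
    obtain ⟨y, hy, hφy⟩ := AddSubgroup.mem_map.mp hg
    -- push `y` into the span of the `w k`
    have hkey : X ≤ AddSubgroup.comap ι.toAddMonoidHom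
        ((Submodule.span ℤ (Set.range w)).toAddSubgroup) := by
      rw [hX, AddSubgroup.closure_le]
      rintro _ ⟨k, rfl⟩
      simpa [hιa k] using Submodule.subset_span (Set.mem_range_self k)
    have hyspan : ι y ∈ Submodule.span ℤ (Set.range w) := hkey hy
    rw [Finsupp.mem_span_range_iff_exists_finsupp] at hyspan
    obtain ⟨c, hc⟩ := hyspan
    -- the main linear relation
    have hrel : (n : ℤ) • ι (φ y) = m • ι y := by
      have h := congrArg ι (hφ y)
      simpa [map_zsmul] using h
    have hφyι : ι (φ y) = -(w i) + w j := by
      rw [hφy]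
      simp [hιa]
    have hl0 : (Finsupp.single j n - Finsupp.single i n - m • c : ℕ →₀ ℤ) = 0 := by
      refine linearIndependent_iff.mp hwliZ _ ?_
      rw [map_sub, map_sub, map_smul, Finsupp.linearCombination_single,
        Finsupp.linearCombination_single, Finsupp.linearCombination_apply, hc]
      rw [hφyι] at hrel
      rw [smul_add, smul_neg] at hrel
      rw [← hrel]
      abel
    have hlj := DFunLike.congr_fun hl0 j
    simp [Finsupp.single_apply, hij, smul_eq_mul] at hlj
    -- hlj : n - m * c j = 0 (roughly); conclude m ∣ n
    have hdvd : m ∣ n := ⟨c j, by omega⟩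
    have : IsUnit m := hmn.isUnit_of_dvd' dvd_rfl hdvd
    rw [Int.isUnit_iff] at this
    rcases this with h | h
    · exact hm1 h
    · exact hm2 h
  · intro hm X
    have hmm : m * m = 1 := by rcases hm with rfl | rfl <;> norm_num
    have hle : X ≤ X.map φ := by
      intro x hx
      refine AddSubgroup.mem_map.mpr ⟨m • n • x, X.zsmul_mem (X.zsmul_mem hx n) m, ?_⟩
      apply hbij.1
      show n • φ (m • n • x) = n • x
      rw [hφ, smul_smul, smul_smul, hmm, one_mul]
    rw [← AddSubgroup.inf_relIndex_right, inf_eq_right.mpr hle, AddSubgroup.relIndex_self]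
    exact one_ne_zero
end

section
/- Let A be an abelian group and φ an endomorphism of A. (1) If A₀ is a subgroup of finite index in A with φ(A₀) ⊆ A₀ and the restriction of φ to A₀ is inertial (resp. LIN), then φ is inertial (resp. LIN) on A. (2) If F is a finite subgroup of A with φ(F) ⊆ F and the endomorphism induced by φ on A/F is inertial (resp. LIN), then φ is inertial (resp. LIN) on A. -/
open AddSubgroup in
/-- The image of a finite-index pair under a hom is still a finite-index pair. -/
theorem relIndex_map_ne_zero_aux {A : Type*} [AddCommGroup A] (φ : A →+ A)
    {Z X : AddSubgroup A} (h : Z.relIndex X ≠ 0) :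
    (Z.map φ).relIndex (X.map φ) ≠ 0 := by
  rw [← relIndex_comap (Z.map φ) φ X]
  intro h0
  exact h (AddSubgroup.relIndex_eq_zero_of_le_left (le_comap_map φ Z) h0)

open AddSubgroup in
/-- If `φ` acts as an inertial (resp. LIN) endomorphism on a subgroup of finite index,
or modulo a finite invariant subgroup, then `φ` is inertial (resp. LIN) on `A`. -/
theorem stmt_11 {A : Type*} [AddCommGroup A] (φ : A →+ A) :
    (∀ A₀ : AddSubgroup A, A₀.index ≠ 0 →
      ∀ ψ : ↥A₀ →+ ↥A₀, (∀ a : ↥A₀, (ψ a : A) = φ a) →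
        (IsInertial ψ → IsInertial φ) ∧ (IsLIN ψ → IsLIN φ)) ∧
    (∀ F : AddSubgroup A, (F : Set A).Finite → (∀ a ∈ F, φ a ∈ F) →
      ∀ ψ : (A ⧸ F) →+ (A ⧸ F),
        (∀ a : A, ψ (QuotientAddGroup.mk a) = QuotientAddGroup.mk (φ a)) →
        (IsInertial ψ → IsInertial φ) ∧ (IsLIN ψ → IsLIN φ)) := by
  constructor
  · -- Part 1: finite-index subgroup
    intro A₀ hA₀ ψ hψ
    have hmapY : ∀ X : AddSubgroup A,
        (X.comap A₀.subtype).map A₀.subtype = A₀ ⊓ X := by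
      intro X
      rw [AddSubgroup.map_comap_eq, AddSubgroup.range_subtype]
    have hmapψ : ∀ X : AddSubgroup A,
        ((X.comap A₀.subtype).map ψ).map A₀.subtype = (A₀ ⊓ X).map φ := by
      intro X
      ext b
      simp only [AddSubgroup.mem_map, AddSubgroup.mem_comap, AddSubgroup.mem_inf]
      constructor
      · rintro ⟨c, ⟨y, hy, rfl⟩, rfl⟩
        exact ⟨(y : A), ⟨y.2, hy⟩, (hψ y).symm⟩
      · rintro ⟨a, ⟨ha0, haX⟩, rfl⟩
        exact ⟨ψ ⟨a, ha0⟩, ⟨⟨a, ha0⟩, haX, rfl⟩, hψ _⟩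
    have hrel : ∀ X : AddSubgroup A, (A₀ ⊓ X).relIndex X ≠ 0 := by
      intro X
      rw [inf_relIndex_right A₀ X]
      intro h0
      exact hA₀ (AddSubgroup.index_eq_zero_of_relIndex_eq_zero h0)
    constructor
    · -- inertial
      intro hI X
      have h1 : X.relIndex ((A₀ ⊓ X) ⊔ (A₀ ⊓ X).map φ) ≠ 0 := by
        have h := hI (X.comap A₀.subtype)
        rwa [relIndex_comap X A₀.subtype, AddSubgroup.map_sup, hmapY X, hmapψ X] at h
      have h2 : ((A₀ ⊓ X) ⊔ (A₀ ⊓ X).map φ).relIndex (X ⊔ (A₀ ⊓ X).map φ) ≠ 0 := by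
        have he : X ⊔ ((A₀ ⊓ X) ⊔ (A₀ ⊓ X).map φ) = X ⊔ (A₀ ⊓ X).map φ := by
          rw [← sup_assoc, sup_eq_left.mpr (inf_le_right : A₀ ⊓ X ≤ X)]
        rw [← he, relIndex_sup_right]
        intro h0
        exact hrel X (AddSubgroup.relIndex_eq_zero_of_le_left
          (le_sup_left : A₀ ⊓ X ≤ (A₀ ⊓ X) ⊔ (A₀ ⊓ X).map φ) h0)
      have h3 : (X ⊔ (A₀ ⊓ X).map φ).relIndex (X ⊔ X.map φ) ≠ 0 := by
        have hZX : (A₀ ⊓ X).map φ ≤ X.map φ := AddSubgroup.map_mono inf_le_right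
        have he : X.map φ ⊔ (X ⊔ (A₀ ⊓ X).map φ) = X ⊔ X.map φ := by
          rw [← sup_assoc, sup_comm (X.map φ) X, sup_assoc, sup_eq_left.mpr hZX]
        rw [← he, relIndex_sup_right]
        intro h0
        exact relIndex_map_ne_zero_aux φ (hrel X)
          (AddSubgroup.relIndex_eq_zero_of_le_left
            (le_sup_right : (A₀ ⊓ X).map φ ≤ X ⊔ (A₀ ⊓ X).map φ) h0)
      exact relIndex_ne_zero_trans h1 (relIndex_ne_zero_trans h2 h3)
    · -- LIN
      intro hL X
      have h1 : ((A₀ ⊓ X).map φ).relIndex (A₀ ⊓ X) ≠ 0 := by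
        have h := hL (X.comap A₀.subtype)
        rwa [← AddSubgroup.comap_map_eq_self_of_injective (f := A₀.subtype)
          A₀.subtype_injective ((X.comap A₀.subtype).map ψ), hmapψ X,
          relIndex_comap, hmapY X] at h
      have h2 : ((A₀ ⊓ X).map φ).relIndex X ≠ 0 :=
        relIndex_ne_zero_trans h1 (hrel X)
      intro h0
      exact h2 (AddSubgroup.relIndex_eq_zero_of_le_left
        (AddSubgroup.map_mono inf_le_right) h0)
  · -- Part 2: finite invariant subgroup
    intro F hF _hφF ψ hψ
    have hFfin : Finite ↥F := hF.to_subtype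
    have hcomp : ∀ X : AddSubgroup A,
        (X.map (QuotientAddGroup.mk' F)).map ψ = (X.map φ).map (QuotientAddGroup.mk' F) := by
      intro X
      rw [AddSubgroup.map_map, AddSubgroup.map_map]
      congr 1
      ext a
      exact hψ a
    have hXF : ∀ X : AddSubgroup A, X.relIndex F ≠ 0 := by
      intro X
      have : Finite (F ⧸ X.addSubgroupOf F) := Quotient.finite _
      exact AddSubgroup.index_ne_zero_of_finite
    constructor
    · -- inertial
      intro hI X
      have h := hI (X.map (QuotientAddGroup.mk' F))
      rw [hcomp X, ← AddSubgroup.map_sup,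
        ← relIndex_comap (X.map (QuotientAddGroup.mk' F)) (QuotientAddGroup.mk' F)
          (X ⊔ X.map φ),
        AddSubgroup.comap_map_eq, QuotientAddGroup.ker_mk'] at h
      have h1 : X.relIndex (X ⊔ F) ≠ 0 := by
        rw [relIndex_sup_left]
        exact hXF X
      exact relIndex_ne_zero_trans h1 h
    · -- LIN
      intro hL X
      have h := hL (X.map (QuotientAddGroup.mk' F))
      rw [hcomp X,
        ← relIndex_comap ((X.map φ).map (QuotientAddGroup.mk' F)) (QuotientAddGroup.mk' F) X,
        AddSubgroup.comap_map_eq, QuotientAddGroup.ker_mk'] at h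
      have h1 : (X.map φ).relIndex (X.map φ ⊔ F) ≠ 0 := by
        rw [relIndex_sup_left]
        exact hXF (X.map φ)
      exact relIndex_ne_zero_trans h1 h
end

section
/- Let A be a torsion abelian group and φ an endomorphism of A; for each prime p let A_p denote the p-primary component of A (note φ(A_p) ⊆ A_p). Then: (R) φ is inertial (RIN) if and only if the restriction of φ to A_p is inertial for every prime p and for all but finitely many primes p one has φ(X) ⊆ X for every subgroup X of A_p. (L) φ is LIN if and only if the restriction of φ to A_p is LIN for every prime p and for all but finitely many primes p the restriction of φ to A_p is bijective and satisfies φ(X) ⊆ X for every subgroup X of A_p. -/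
/-- The `p`-primary component of an abelian group: the subgroup of elements annihilated
by some power of `p`. -/
def pPrimary (A : Type*) [AddCommGroup A] (p : ℕ) : AddSubgroup A where
  carrier := {a : A | ∃ k : ℕ, p ^ k • a = 0}
  zero_mem' := ⟨0, smul_zero _⟩
  add_mem' := by
    rintro a b ⟨k, hk⟩ ⟨l, hl⟩
    refine ⟨k + l, ?_⟩
    have ha : p ^ (k + l) • a = 0 := by rw [pow_add, mul_comm, mul_smul, hk, smul_zero]
    have hb : p ^ (k + l) • b = 0 := by rw [pow_add, mul_smul, hl, smul_zero]
    rw [smul_add, ha, hb, add_zero]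
  neg_mem' := by
    rintro a ⟨k, hk⟩
    exact ⟨k, by rw [smul_neg, hk, neg_zero]⟩


open AddSubgroup

section AuxiliaryLemmas

variable {A : Type*} [AddCommGroup A]

/-- Bezout core lemma. -/
lemma aux_mem_zmultiples_add {m n : ℕ} (h : Nat.Coprime m n) {a b : A}
    (hm : m • a = 0) (hn : n • b = 0) : a ∈ AddSubgroup.zmultiples (a + b) := by
  obtain ⟨u, v, huv⟩ := Nat.isCoprime_iff_coprime.mpr h
  have hmz : (m : ℤ) • a = 0 := by rw [natCast_zsmul, hm]
  have hnz : (n : ℤ) • b = 0 := by rw [natCast_zsmul, hn]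
  refine mem_zmultiples_iff.mpr ⟨v * n, ?_⟩
  rw [smul_add, mul_smul, mul_smul, hnz, smul_zero, add_zero, ← mul_smul]
  conv_rhs => rw [show a = (u * (m : ℤ) + v * n) • a by rw [huv, one_smul]]
  rw [add_smul, mul_smul u, hmz, smul_zero, zero_add]

lemma aux_eq_zero_of_coprime_smul {m n : ℕ} (h : Nat.Coprime m n) {a : A}
    (hm : m • a = 0) (hn : n • a = 0) : a = 0 := by
  have hn' : n • (-a) = 0 := by rw [smul_neg, hn, neg_zero]
  have := aux_mem_zmultiples_add h hm hn'
  rw [add_neg_cancel] at this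
  obtain ⟨k, hk⟩ := mem_zmultiples_iff.mp this
  rw [← hk, smul_zero]

lemma aux_mem_of_add_mem {m n : ℕ} (h : Nat.Coprime m n) {a b : A}
    (hm : m • a = 0) (hn : n • b = 0) {S : AddSubgroup A} (hs : a + b ∈ S) : a ∈ S := by
  obtain ⟨k, hk⟩ := mem_zmultiples_iff.mp (aux_mem_zmultiples_add h hm hn)
  rw [← hk]; exact S.zsmul_mem hs k

lemma aux_pPrimary_map_le (φ : A →+ A) (p : ℕ) :
    (pPrimary A p).map φ ≤ pPrimary A p := by
  rintro _ ⟨a, ⟨k, hk⟩, rfl⟩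
  exact ⟨k, by rw [← map_nsmul, hk, map_zero]⟩

/-- Elements annihilated by some natural number coprime to `q`. -/
def coprimeTorsion (A : Type*) [AddCommGroup A] (q : ℕ) : AddSubgroup A where
  carrier := {a : A | ∃ n : ℕ, Nat.Coprime n q ∧ n • a = 0}
  zero_mem' := ⟨1, Nat.coprime_one_left q, smul_zero _⟩
  add_mem' := by
    rintro a b ⟨m, hm, hma⟩ ⟨n, hn, hnb⟩
    refine ⟨m * n, hm.mul hn, ?_⟩
    rw [smul_add, mul_comm, mul_smul, hma, smul_zero, zero_add, mul_smul, smul_comm, hnb, smul_zero]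
  neg_mem' := by
    rintro a ⟨n, hn, hna⟩
    exact ⟨n, hn, by rw [smul_neg, hna, neg_zero]⟩

lemma aux_iSup_inf_primary {P : Set ℕ} (hP : ∀ p ∈ P, Nat.Prime p) (W : ℕ → AddSubgroup A)
    (hW : ∀ p ∈ P, W p ≤ pPrimary A p) {q : ℕ} (hq : q ∈ P) {x : A}
    (hx : x ∈ ⨆ p ∈ P, W p) (hxq : x ∈ pPrimary A q) : x ∈ W q := by
  have h1 : (⨆ p ∈ P, W p) ≤ W q ⊔ coprimeTorsion A q := by
    refine iSup_le fun p => iSup_le fun hp => ?_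
    rcases eq_or_ne p q with rfl | hne
    · exact le_sup_left
    · refine le_trans ?_ le_sup_right
      intro a ha
      obtain ⟨k, hk⟩ := hW p hp ha
      exact ⟨p ^ k, (((Nat.coprime_primes (hP p hp) (hP q hq)).mpr hne)).pow_left k, hk⟩
  obtain ⟨w, hw, z, hz, hwz⟩ := AddSubgroup.mem_sup.mp (h1 hx)
  have hz' : z ∈ pPrimary A q := by
    have := (pPrimary A q).sub_mem hxq (hW q hq hw)
    rwa [show x - w = z by rw [← hwz]; abel] at this
  obtain ⟨k, hk⟩ := hz'
  obtain ⟨n, hcop, hn⟩ := hz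
  have hz0 : z = 0 := aux_eq_zero_of_coprime_smul (Nat.Coprime.pow_left k hcop.symm) hk hn
  rw [← hwz, hz0, add_zero]; exact hw

lemma aux_mem_zmultiples_symm {z w : A} (hz : IsOfFinAddOrder z)
    (hw : w ∈ AddSubgroup.zmultiples z) (ho : addOrderOf z ∣ addOrderOf w) :
    z ∈ AddSubgroup.zmultiples w := by
  have hle : AddSubgroup.zmultiples w ≤ AddSubgroup.zmultiples z := zmultiples_le.mpr hw
  have hwz : addOrderOf w ∣ addOrderOf z := by
    apply addOrderOf_dvd_of_nsmul_eq_zero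
    obtain ⟨c, hc⟩ := mem_zmultiples_iff.mp hw
    rw [← hc, smul_comm, addOrderOf_nsmul_eq_zero, smul_zero]
  have heq : addOrderOf w = addOrderOf z := Nat.dvd_antisymm hwz ho
  have hfin : (AddSubgroup.zmultiples z : Set A).Finite := finite_zmultiples.mpr hz
  have hset : (AddSubgroup.zmultiples w : Set A) = AddSubgroup.zmultiples z := by
    apply Set.eq_of_subset_of_ncard_le hle _ hfin
    rw [← Nat.card_coe_set_eq, ← Nat.card_coe_set_eq]
    simp only [SetLike.coe_sort_coe, Nat.card_zmultiples, heq, le_refl]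
  have : z ∈ (AddSubgroup.zmultiples w : Set A) := by rw [hset]; exact mem_zmultiples z
  exact this

lemma aux_primary_decomp_aux :
    ∀ n : ℕ, ∀ x : A, 0 < n → n • x = 0 →
    ∃ (F : Finset ℕ) (f : ℕ → A), (∀ p ∈ F, p.Prime ∧ p ∣ n) ∧
      (∀ p ∈ F, (∃ k, p ^ k • f p = 0) ∧ f p ∈ AddSubgroup.zmultiples x) ∧
      x = ∑ p ∈ F, f p := by
  intro n
  induction n using Nat.strong_induction_on with
  | _ n ih =>
    intro x hn hnx
    rcases eq_or_ne n 1 with rfl | hne1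
    · refine ⟨∅, fun _ => 0, by simp, by simp, by simpa using hnx⟩
    obtain ⟨p, hp, hpn⟩ := Nat.exists_prime_and_dvd hne1
    set k := n.factorization p with hk
    set m := n / p ^ k with hm
    have hn0 : n ≠ 0 := hn.ne'
    have hpk_dvd : p ^ k ∣ n := Nat.ordProj_dvd n p
    have hmul : p ^ k * m = n := Nat.ordProj_mul_ordCompl_eq_self n p
    have hcop : Nat.Coprime p m := Nat.coprime_ordCompl hp hn0
    have hcopk : Nat.Coprime (p ^ k) m := hcop.pow_left k
    have hkpos : 0 < k := (hp.factorization_pos_of_dvd hn0 hpn)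
    have hmpos : 0 < m := Nat.ordCompl_pos p hn0
    have hmlt : m < n := by
      apply Nat.div_lt_self hn
      exact Nat.one_lt_pow hkpos.ne' hp.one_lt
    obtain ⟨u, v, huv⟩ := Nat.isCoprime_iff_coprime.mpr hcopk
    set a := (v * (m : ℤ)) • x with ha
    set b := (u * ((p : ℤ) ^ k)) • x with hb
    have hnzx : (n : ℤ) • x = 0 := by rw [natCast_zsmul, hnx]
    have hab : x = a + b := by
      rw [ha, hb, ← add_smul]
      rw [show v * (m : ℤ) + u * (p : ℤ) ^ k = 1 by push_cast at huv ⊢; linarith]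
      rw [one_smul]
    have hpa : p ^ k • a = 0 := by
      rw [ha, ← natCast_zsmul, ← mul_smul]
      rw [show ((p ^ k : ℕ) : ℤ) * (v * m) = v * (n : ℤ) by push_cast [← hmul]; ring]
      rw [mul_smul, hnzx, smul_zero]
    have hmb : m • b = 0 := by
      rw [hb, ← natCast_zsmul, ← mul_smul]
      rw [show ((m : ℕ) : ℤ) * (u * (p : ℤ) ^ k) = u * (n : ℤ) by push_cast [← hmul]; ring]
      rw [mul_smul, hnzx, smul_zero]
    obtain ⟨F, f, hF1, hF2, hF3⟩ := ih m hmlt b hmpos hmb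
    have hpF : p ∉ F := fun hpF =>
      (Nat.Prime.coprime_iff_not_dvd hp |>.mp hcop) (hF1 p hpF).2
    refine ⟨insert p F, Function.update f p a, ?_, ?_, ?_⟩
    · intro q hq
      rcases Finset.mem_insert.mp hq with rfl | hqF
      · exact ⟨hp, hpn⟩
      · exact ⟨(hF1 q hqF).1, ((hF1 q hqF).2).trans (hmul ▸ Dvd.intro_left _ rfl)⟩
    · intro q hq
      rcases Finset.mem_insert.mp hq with rfl | hqF
      · rw [Function.update_self]
        exact ⟨⟨k, hpa⟩, mem_zmultiples_iff.mpr ⟨v * m, rfl⟩⟩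
      · have hqp : q ≠ p := fun h => hpF (h ▸ hqF)
        rw [Function.update_of_ne hqp]
        refine ⟨(hF2 q hqF).1, ?_⟩
        have hbx : b ∈ AddSubgroup.zmultiples x := mem_zmultiples_iff.mpr ⟨u * (p : ℤ) ^ k, rfl⟩
        exact zmultiples_le.mpr hbx ((hF2 q hqF).2)
    · rw [Finset.sum_insert hpF, Function.update_self]
      have : ∑ q ∈ F, Function.update f p a q = ∑ q ∈ F, f q := by
        apply Finset.sum_congr rfl
        intro q hqF
        exact Function.update_of_ne (fun h : q = p => hpF (h ▸ hqF)) _ _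
      rw [this, ← hF3, hab]

lemma aux_relindex_sup_of_le {Z W Y : AddSubgroup A} (hZW : Z ≤ W)
    (hZ : Z.relIndex (Z ⊔ Y) ≠ 0) : W.relIndex (W ⊔ Y) ≠ 0 := by
  rw [sup_comm, AddSubgroup.relIndex_sup_right] at hZ ⊢
  intro h0
  exact hZ (Nat.eq_zero_of_zero_dvd (h0 ▸ AddSubgroup.relIndex_dvd_of_le_left Y hZW))

lemma aux_relindex_sup_finset (Y Z : ℕ → AddSubgroup A) :
    ∀ (F : Finset ℕ), (∀ p ∈ F, (Z p).relIndex (Z p ⊔ Y p) ≠ 0) →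
    ∀ W : AddSubgroup A, (∀ p ∈ F, Z p ≤ W) → W.relIndex (W ⊔ ⨆ p ∈ F, Y p) ≠ 0 := by
  intro F
  induction F using Finset.induction_on with
  | empty => intro _ W _; simp [AddSubgroup.relIndex_self]
  | insert p F' hpF ih =>
    intro hrel W hle
    have h1 : W.relIndex (W ⊔ Y p) ≠ 0 :=
      aux_relindex_sup_of_le (hle p (Finset.mem_insert_self p F'))
        (hrel p (Finset.mem_insert_self p F'))
    have h2 : (W ⊔ Y p).relIndex ((W ⊔ Y p) ⊔ ⨆ q ∈ F', Y q) ≠ 0 :=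
      ih (fun q hq => hrel q (Finset.mem_insert_of_mem hq)) (W ⊔ Y p)
        (fun q hq => (hle q (Finset.mem_insert_of_mem hq)).trans le_sup_left)
    have hchain := AddSubgroup.relIndex_mul_relIndex W (W ⊔ Y p)
      ((W ⊔ Y p) ⊔ ⨆ q ∈ F', Y q) le_sup_left le_sup_left
    have : W.relIndex ((W ⊔ Y p) ⊔ ⨆ q ∈ F', Y q) ≠ 0 := by
      rw [← hchain]; exact mul_ne_zero h1 h2
    have heq : (W ⊔ Y p) ⊔ ⨆ q ∈ F', Y q = W ⊔ ⨆ q ∈ insert p F', Y q := by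
      rw [Finset.iSup_insert, sup_assoc]
    rwa [heq] at this

lemma aux_relindex_ne_zero_of_le_right {H K L : AddSubgroup A} (hKL : K ≤ L)
    (h : H.relIndex L ≠ 0) : H.relIndex K ≠ 0 :=
  fun h0 => h (AddSubgroup.relIndex_eq_zero_of_le_right hKL h0)

lemma aux_inf_relindex {K L : AddSubgroup A} : (L ⊓ K).relIndex L = K.relIndex L := by
  rw [inf_comm, AddSubgroup.inf_relIndex_right]

lemma aux_good_prime_le_map (htor : AddMonoid.IsTorsion A) (φ : A →+ A) {p : ℕ}
    (hbij : Set.BijOn φ (pPrimary A p) (pPrimary A p))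
    (hinv : ∀ X : AddSubgroup A, X ≤ pPrimary A p → X.map φ ≤ X)
    {Z : AddSubgroup A} (hZ : Z ≤ pPrimary A p) : Z ≤ Z.map φ := by
  intro z hz
  have hzp : z ∈ pPrimary A p := hZ hz
  have h1 : φ z ∈ AddSubgroup.zmultiples z :=
    hinv (AddSubgroup.zmultiples z) (zmultiples_le.mpr hzp) ⟨z, mem_zmultiples z, rfl⟩
  have hfz : IsOfFinAddOrder z := htor z
  have hdvd : addOrderOf z ∣ addOrderOf (φ z) := by
    apply addOrderOf_dvd_of_nsmul_eq_zero
    have heq : φ (addOrderOf (φ z) • z) = φ (0 : A) := by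
      rw [map_nsmul, addOrderOf_nsmul_eq_zero, map_zero]
    exact hbij.injOn ((pPrimary A p).nsmul_mem hzp _) ((pPrimary A p).zero_mem) heq
  have h2 : z ∈ AddSubgroup.zmultiples (φ z) := aux_mem_zmultiples_symm hfz h1 hdvd
  obtain ⟨c, hc⟩ := mem_zmultiples_iff.mp h2
  exact ⟨c • z, Z.zsmul_mem hz c, by rw [map_zsmul, hc]⟩

lemma aux_relindex_eq_zero_of_witnesses {P : Set ℕ} (hP : P.Infinite)
    (hprime : ∀ p ∈ P, Nat.Prime p) {v : ℕ → A} {N K : AddSubgroup A}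
    (hv : ∀ p ∈ P, v p ∈ pPrimary A p)
    (hvK : ∀ p (hp : p ∈ P), v p ∈ K) (hvN : ∀ p ∈ P, v p ∉ N) : N.relIndex K = 0 := by
  have : Infinite (K ⧸ N.addSubgroupOf K) := by
    haveI := hP.to_subtype
    refine Infinite.of_injective
      (fun p : P => QuotientAddGroup.mk (⟨v p, hvK p p.2⟩ : K)) ?_
    rintro ⟨p, hp⟩ ⟨q, hq⟩ hpq
    by_contra hne
    have hpq' : p ≠ q := fun h => hne (Subtype.ext h)
    rw [QuotientAddGroup.eq] at hpq
    have hsub : -(v p) + v q ∈ N := hpq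
    obtain ⟨k, hk⟩ := hv q hq
    obtain ⟨l, hl⟩ := hv p hp
    have hcop : Nat.Coprime (q ^ k) (p ^ l) :=
      Nat.Coprime.pow k l (((Nat.coprime_primes (hprime q hq) (hprime p hp)).mpr
        (fun h => hpq' h.symm)))
    have hmem : v q + (-(v p)) ∈ N := by rwa [add_comm] at hsub
    have : v q ∈ N := aux_mem_of_add_mem hcop hk
      (by rw [smul_neg, hl, neg_zero]) hmem
    exact hvN q hq this
  rw [AddSubgroup.relIndex, AddSubgroup.index]
  exact Nat.card_eq_zero_of_infinite

end AuxiliaryLemmas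

/-- An endomorphism of a torsion abelian group is inertial (resp. LIN) iff it is inertial
(resp. LIN and bijective) on every `p`-primary component and a power endomorphism
(resp. a bijective power endomorphism) on all but finitely many of them. Note that each
primary component is invariant under `φ`. -/
theorem stmt_15 {A : Type*} [AddCommGroup A] (htor : AddMonoid.IsTorsion A)
    (φ : A →+ A) :
    (∀ p : ℕ, (pPrimary A p).map φ ≤ pPrimary A p) ∧
    (IsInertial φ ↔
      ((∀ p : ℕ, p.Prime → ∀ X : AddSubgroup A, X ≤ pPrimary A p →
          X.relIndex (X ⊔ X.map φ) ≠ 0) ∧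
        {p : ℕ | p.Prime ∧
          ¬ ∀ X : AddSubgroup A, X ≤ pPrimary A p → X.map φ ≤ X}.Finite)) ∧
    (IsLIN φ ↔
      ((∀ p : ℕ, p.Prime → ∀ X : AddSubgroup A, X ≤ pPrimary A p →
          (X.map φ).relIndex X ≠ 0) ∧
        {p : ℕ | p.Prime ∧
          ¬ (Set.BijOn φ (pPrimary A p) (pPrimary A p) ∧
             ∀ X : AddSubgroup A, X ≤ pPrimary A p → X.map φ ≤ X)}.Finite)) := by
  have part1 : ∀ p : ℕ, (pPrimary A p).map φ ≤ pPrimary A p := aux_pPrimary_map_le φ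
  refine ⟨part1, ?_, ?_⟩
  · -- RIN characterization
    constructor
    · intro h
      refine ⟨fun p _ X _ => h X, ?_⟩
      by_contra hinf
      have hinf' : {p : ℕ | p.Prime ∧
          ¬ ∀ X : AddSubgroup A, X ≤ pPrimary A p → X.map φ ≤ X}.Infinite := hinf
      have hchoice : ∀ p : ℕ, ∃ y : A, p ∈ {p : ℕ | p.Prime ∧
          ¬ ∀ X : AddSubgroup A, X ≤ pPrimary A p → X.map φ ≤ X} →
          y ∈ pPrimary A p ∧ φ y ∉ AddSubgroup.zmultiples y := by
        intro p
        by_cases hp : p ∈ {p : ℕ | p.Prime ∧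
            ¬ ∀ X : AddSubgroup A, X ≤ pPrimary A p → X.map φ ≤ X}
        · obtain ⟨hpp, hni⟩ := hp
          push_neg at hni
          obtain ⟨X₀, hX₀le, hnle⟩ := hni
          obtain ⟨t, ht, htn⟩ := SetLike.not_le_iff_exists.mp hnle
          obtain ⟨y, hy, rfl⟩ := ht
          exact ⟨y, fun _ => ⟨hX₀le hy, fun hc => htn (zmultiples_le.mpr hy hc)⟩⟩
        · exact ⟨0, fun hmem => absurd hmem hp⟩
      choose y hy using hchoice
      refine h (⨆ p ∈ {p : ℕ | p.Prime ∧
          ¬ ∀ X : AddSubgroup A, X ≤ pPrimary A p → X.map φ ≤ X},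
          AddSubgroup.zmultiples (y p))
        (aux_relindex_eq_zero_of_witnesses hinf' (fun p hp => hp.1)
          (v := fun p => φ (y p)) ?_ ?_ ?_)
      · intro p hp
        exact part1 p ⟨y p, (hy p hp).1, rfl⟩
      · intro p hp
        refine AddSubgroup.mem_sup_right (AddSubgroup.mem_map_of_mem φ ?_)
        exact AddSubgroup.mem_iSup_of_mem p (AddSubgroup.mem_iSup_of_mem hp
          (mem_zmultiples (y p)))
      · intro p hp hmem
        exact (hy p hp).2 (aux_iSup_inf_primary (fun q hq => hq.1)
          (fun q => AddSubgroup.zmultiples (y q))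
          (fun q hq => zmultiples_le.mpr (hy q hq).1) hp hmem
          (part1 p ⟨y p, (hy p hp).1, rfl⟩))
    · rintro ⟨h1, hfin⟩ X
      have claim1 : X ⊔ X.map φ ≤ X ⊔ ⨆ p ∈ hfin.toFinset, ((X ⊓ pPrimary A p).map φ) := by
        refine sup_le le_sup_left ?_
        rintro _ ⟨x, hx, rfl⟩
        obtain ⟨F, f, hF1, hF2, hF3⟩ := aux_primary_decomp_aux (addOrderOf x) x
          (htor x).addOrderOf_pos (addOrderOf_nsmul_eq_zero x)
        rw [hF3, map_sum]
        refine AddSubgroup.sum_mem _ (fun q hq => ?_)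
        have hfq : f q ∈ X ⊓ pPrimary A q :=
          AddSubgroup.mem_inf.mpr ⟨zmultiples_le.mpr hx (hF2 q hq).2, (hF2 q hq).1⟩
        by_cases hqS : q ∈ hfin.toFinset
        · refine AddSubgroup.mem_sup_right ?_
          exact AddSubgroup.mem_iSup_of_mem q (AddSubgroup.mem_iSup_of_mem hqS
            (AddSubgroup.mem_map_of_mem φ hfq))
        · have hinv : ∀ Y : AddSubgroup A, Y ≤ pPrimary A q → Y.map φ ≤ Y := by
            by_contra hni
            exact hqS (hfin.mem_toFinset.mpr ⟨(hF1 q hq).1, hni⟩)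
          exact AddSubgroup.mem_sup_left
            (AddSubgroup.mem_inf.mp
              (hinv (X ⊓ pPrimary A q) inf_le_right (AddSubgroup.mem_map_of_mem φ hfq))).1
      have claim2 : X.relIndex (X ⊔ ⨆ p ∈ hfin.toFinset,
          ((X ⊓ pPrimary A p).map φ)) ≠ 0 := by
        refine aux_relindex_sup_finset (fun p => (X ⊓ pPrimary A p).map φ)
          (fun p => X ⊓ pPrimary A p) hfin.toFinset ?_ X (fun p _ => inf_le_left)
        intro p hpS
        exact h1 p (hfin.mem_toFinset.mp hpS).1 (X ⊓ pPrimary A p) inf_le_right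
      intro h0
      refine claim2 ?_
      rw [← AddSubgroup.relIndex_mul_relIndex X (X ⊔ X.map φ)
        (X ⊔ ⨆ p ∈ hfin.toFinset, ((X ⊓ pPrimary A p).map φ)) le_sup_left claim1,
        h0, zero_mul]
  · -- LIN characterization
    constructor
    · intro h
      refine ⟨fun p _ X _ => h X, ?_⟩
      by_contra hinf
      have hinf' : {p : ℕ | p.Prime ∧
          ¬ (Set.BijOn φ (pPrimary A p) (pPrimary A p) ∧
             ∀ X : AddSubgroup A, X ≤ pPrimary A p → X.map φ ≤ X)}.Infinite := hinf
      have hchoice : ∀ p : ℕ, ∃ (W : AddSubgroup A) (v : A), p ∈ {p : ℕ | p.Prime ∧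
          ¬ (Set.BijOn φ (pPrimary A p) (pPrimary A p) ∧
             ∀ X : AddSubgroup A, X ≤ pPrimary A p → X.map φ ≤ X)} →
          W ≤ pPrimary A p ∧ v ∈ W ∧ v ∉ W.map φ := by
        intro p
        by_cases hp : p ∈ {p : ℕ | p.Prime ∧
            ¬ (Set.BijOn φ (pPrimary A p) (pPrimary A p) ∧
               ∀ X : AddSubgroup A, X ≤ pPrimary A p → X.map φ ≤ X)}
        · obtain ⟨hpp, hbad⟩ := hp
          by_cases hinv : ∀ Y : AddSubgroup A, Y ≤ pPrimary A p → Y.map φ ≤ Y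
          · have hnb : ¬ Set.BijOn φ (pPrimary A p) (pPrimary A p) :=
              fun hb => hbad ⟨hb, hinv⟩
            by_cases hinj : Set.InjOn φ (pPrimary A p)
            · have hns : ¬ Set.SurjOn φ (pPrimary A p) (pPrimary A p) := by
                intro hs
                exact hnb ⟨fun a ha => part1 p ⟨a, ha, rfl⟩, hinj, hs⟩
              obtain ⟨t, ht, htn⟩ := Set.not_subset.mp hns
              refine ⟨pPrimary A p, t, fun _ => ⟨le_refl _, ht, ?_⟩⟩
              rintro ⟨w, hw, hwt⟩
              exact htn ⟨w, hw, hwt⟩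
            · rw [Set.InjOn] at hinj
              push_neg at hinj
              obtain ⟨a, ha, b, hb, hab, hne⟩ := hinj
              refine ⟨AddSubgroup.zmultiples (a - b), a - b,
                fun _ => ⟨zmultiples_le.mpr ((pPrimary A p).sub_mem ha hb),
                  mem_zmultiples _, ?_⟩⟩
              rintro ⟨w, hw, hwe⟩
              obtain ⟨c, hc'⟩ := mem_zmultiples_iff.mp hw
              have hz : φ (a - b) = 0 := by rw [map_sub, hab, sub_self]
              have : a - b = 0 := by rw [← hwe, ← hc', map_zsmul, hz, smul_zero]
              exact hne (sub_eq_zero.mp this)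
          · push_neg at hinv
            obtain ⟨X₀, hle, hnle⟩ := hinv
            obtain ⟨t, ht, htn⟩ := SetLike.not_le_iff_exists.mp hnle
            obtain ⟨yy, hyy, rfl⟩ := ht
            refine ⟨AddSubgroup.zmultiples yy, yy,
              fun _ => ⟨zmultiples_le.mpr (hle hyy), mem_zmultiples _, ?_⟩⟩
            rintro ⟨w, hw, hwe⟩
            obtain ⟨c, rfl⟩ := mem_zmultiples_iff.mp hw
            have hyz : yy ∈ AddSubgroup.zmultiples (φ yy) :=
              mem_zmultiples_iff.mpr ⟨c, by rw [← map_zsmul]; exact hwe⟩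
            have hdvd : addOrderOf (φ yy) ∣ addOrderOf yy := by
              apply addOrderOf_dvd_of_nsmul_eq_zero
              rw [← map_nsmul, addOrderOf_nsmul_eq_zero, map_zero]
            have := aux_mem_zmultiples_symm (htor (φ yy)) hyz hdvd
            exact htn (zmultiples_le.mpr hyy this)
        · exact ⟨⊥, 0, fun hmem => absurd hmem hp⟩
      choose W v hWv using hchoice
      refine h (⨆ p ∈ {p : ℕ | p.Prime ∧
          ¬ (Set.BijOn φ (pPrimary A p) (pPrimary A p) ∧
             ∀ X : AddSubgroup A, X ≤ pPrimary A p → X.map φ ≤ X)}, W p)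
        (aux_relindex_eq_zero_of_witnesses hinf' (fun p hp => hp.1) (v := v) ?_ ?_ ?_)
      · intro p hp
        exact (hWv p hp).1 (hWv p hp).2.1
      · intro p hp
        exact AddSubgroup.mem_iSup_of_mem p (AddSubgroup.mem_iSup_of_mem hp (hWv p hp).2.1)
      · intro p hp hmem
        have hXmap : (⨆ q ∈ {p : ℕ | p.Prime ∧
            ¬ (Set.BijOn φ (pPrimary A p) (pPrimary A p) ∧
               ∀ X : AddSubgroup A, X ≤ pPrimary A p → X.map φ ≤ X)}, W q).map φ =
            ⨆ q ∈ {p : ℕ | p.Prime ∧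
            ¬ (Set.BijOn φ (pPrimary A p) (pPrimary A p) ∧
               ∀ X : AddSubgroup A, X ≤ pPrimary A p → X.map φ ≤ X)}, (W q).map φ := by
          rw [AddSubgroup.map_iSup]
          exact iSup_congr fun q => AddSubgroup.map_iSup φ _
        rw [hXmap] at hmem
        exact (hWv p hp).2.2 (aux_iSup_inf_primary (fun q hq => hq.1)
          (fun q => (W q).map φ)
          (fun q hq => (AddSubgroup.map_mono ((hWv q hq).1)).trans (part1 q)) hp hmem
          ((hWv p hp).1 (hWv p hp).2.1))
    · rintro ⟨h1, hfin⟩ X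
      have hBle : ((⨆ p ∈ hfin.toFinset, ((X ⊓ pPrimary A p) ⊓ (X ⊓ pPrimary A p).map φ)) ⊔
          ⨆ (p : ℕ) (_ : p.Prime ∧ p ∉ hfin.toFinset), (X ⊓ pPrimary A p)) ≤ X.map φ := by
        refine sup_le (iSup_le fun p => iSup_le fun _ =>
          inf_le_right.trans (AddSubgroup.map_mono inf_le_left))
          (iSup_le fun p => iSup_le fun hp => ?_)
        obtain ⟨hpp, hpS⟩ := hp
        have hgood : Set.BijOn φ (pPrimary A p) (pPrimary A p) ∧
            ∀ Y : AddSubgroup A, Y ≤ pPrimary A p → Y.map φ ≤ Y := by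
          by_contra hc
          exact hpS (hfin.mem_toFinset.mpr ⟨hpp, hc⟩)
        exact (aux_good_prime_le_map htor φ hgood.1 hgood.2 inf_le_right).trans
          (AddSubgroup.map_mono inf_le_left)
      have hBX : ((⨆ p ∈ hfin.toFinset, ((X ⊓ pPrimary A p) ⊓ (X ⊓ pPrimary A p).map φ)) ⊔
          ⨆ (p : ℕ) (_ : p.Prime ∧ p ∉ hfin.toFinset), (X ⊓ pPrimary A p)) ≤ X :=
        sup_le (iSup_le fun p => iSup_le fun _ => inf_le_left.trans inf_le_left)
          (iSup_le fun p => iSup_le fun _ => inf_le_left)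
      have hXle : X ≤ ((⨆ p ∈ hfin.toFinset,
          ((X ⊓ pPrimary A p) ⊓ (X ⊓ pPrimary A p).map φ)) ⊔
          ⨆ (p : ℕ) (_ : p.Prime ∧ p ∉ hfin.toFinset), (X ⊓ pPrimary A p)) ⊔
          ⨆ p ∈ hfin.toFinset, (X ⊓ pPrimary A p) := by
        intro x hx
        obtain ⟨F, f, hF1, hF2, hF3⟩ := aux_primary_decomp_aux (addOrderOf x) x
          (htor x).addOrderOf_pos (addOrderOf_nsmul_eq_zero x)
        rw [hF3]
        refine AddSubgroup.sum_mem _ fun q hq => ?_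
        have hfq : f q ∈ X ⊓ pPrimary A q :=
          AddSubgroup.mem_inf.mpr ⟨zmultiples_le.mpr hx (hF2 q hq).2, (hF2 q hq).1⟩
        by_cases hqS : q ∈ hfin.toFinset
        · exact AddSubgroup.mem_sup_right
            (AddSubgroup.mem_iSup_of_mem q (AddSubgroup.mem_iSup_of_mem hqS hfq))
        · refine AddSubgroup.mem_sup_left (AddSubgroup.mem_sup_right ?_)
          exact AddSubgroup.mem_iSup_of_mem q
            (AddSubgroup.mem_iSup_of_mem ⟨(hF1 q hq).1, hqS⟩ hfq)
      have hrel : (((⨆ p ∈ hfin.toFinset, ((X ⊓ pPrimary A p) ⊓ (X ⊓ pPrimary A p).map φ)) ⊔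
          ⨆ (p : ℕ) (_ : p.Prime ∧ p ∉ hfin.toFinset), (X ⊓ pPrimary A p))).relIndex
          (((⨆ p ∈ hfin.toFinset, ((X ⊓ pPrimary A p) ⊓ (X ⊓ pPrimary A p).map φ)) ⊔
          ⨆ (p : ℕ) (_ : p.Prime ∧ p ∉ hfin.toFinset), (X ⊓ pPrimary A p)) ⊔
          ⨆ p ∈ hfin.toFinset, (X ⊓ pPrimary A p)) ≠ 0 := by
        refine aux_relindex_sup_finset (fun p => X ⊓ pPrimary A p)
          (fun p => (X ⊓ pPrimary A p) ⊓ (X ⊓ pPrimary A p).map φ) hfin.toFinset ?_ _ ?_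
        · intro p hpS
          have h0 := h1 p (hfin.mem_toFinset.mp hpS).1 (X ⊓ pPrimary A p) inf_le_right
          have hEZ : ((X ⊓ pPrimary A p) ⊓ (X ⊓ pPrimary A p).map φ) ⊔ (X ⊓ pPrimary A p) =
              X ⊓ pPrimary A p := sup_eq_right.mpr inf_le_left
          rw [hEZ, aux_inf_relindex]
          exact h0
        · intro p hpS
          exact le_trans (le_iSup₂ (f := fun p (_ : p ∈ hfin.toFinset) =>
            (X ⊓ pPrimary A p) ⊓ (X ⊓ pPrimary A p).map φ) p hpS) le_sup_left
      have hrelBX := aux_relindex_ne_zero_of_le_right hXle hrel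
      intro h0
      exact hrelBX (Nat.eq_zero_of_zero_dvd
        (h0 ▸ AddSubgroup.relIndex_dvd_of_le_left X hBle))
end

section
/- Let A be an abelian group, let D be a divisible torsion subgroup of A, and let φ be an endomorphism of A which is either inertial (RIN) or LIN. Then φ(X) ⊆ X for every subgroup X of A contained in D; in particular φ(D) ⊆ D and φ acts as a multiplication on D. -/
/-- Auxiliary: the image under any subgroup, nsmul-index lemma. -/
theorem relindex_zsmul_mem {A : Type*} [AddCommGroup A] (H K : AddSubgroup A) (z : A)
    (hz : z ∈ K) : ((H.relIndex K : ℤ)) • z ∈ H := by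
  have h1 := AddSubgroup.nsmul_index_mem (H.addSubgroupOf K) (⟨z, hz⟩ : K)
  rw [AddSubgroup.mem_addSubgroupOf] at h1
  have h2 : ((((H.addSubgroupOf K).index • (⟨z, hz⟩ : K)) : K) : A)
      = ((H.relIndex K : ℤ)) • z := by
    simp [AddSubgroup.relIndex, natCast_zsmul]
  rwa [h2] at h1

/-- Core case: `x` is a `p`-element of the divisible subgroup `D`. -/
theorem core_aux {A : Type*} [AddCommGroup A] (D : AddSubgroup A)
    (hdiv : ∀ n : ℕ, 0 < n → ∀ d ∈ D, ∃ d' ∈ D, n • d' = d)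
    (φ : A →+ A) (hφ : IsInertial φ ∨ IsLIN φ)
    {p : ℕ} (hp : p.Prime) {x : A} (hxD : x ∈ D) (hx0 : x ≠ 0)
    (hex : ∃ e : ℕ, p ^ e • x = 0) :
    φ x ∈ AddSubgroup.zmultiples x := by
  classical
  -- minimal exponent
  set E := Nat.find hex with hEdef
  have hExZ : (p : ℤ) ^ E • x = 0 := by
    have h := Nat.find_spec hex
    rw [← natCast_zsmul] at h
    push_cast at h
    exact h
  have hminZ : ∀ m, m < E → (p : ℤ) ^ m • x ≠ 0 := by
    intro m hm hcon
    apply Nat.find_min hex hm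
    have h : ((p ^ m : ℕ) : ℤ) • x = 0 := by push_cast; exact hcon
    rwa [natCast_zsmul] at h
  have hE1 : 1 ≤ E := by
    by_contra h
    have hE0 : E = 0 := by omega
    apply hx0
    have := hExZ
    rw [hE0, pow_zero, one_zsmul] at this
    exact this
  obtain ⟨F, hEF⟩ : ∃ F, E = F + 1 := ⟨E - 1, by omega⟩
  have hpne : ((p : ℤ)) ≠ 0 := by exact_mod_cast hp.ne_zero
  -- the chain
  obtain ⟨Y, hY0, hYD, hYs⟩ :
      ∃ Y : ℕ → A, Y 0 = x ∧ (∀ k, Y k ∈ D) ∧ ∀ k, (p : ℤ) • Y (k + 1) = Y k := by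
    have hstep : ∀ d : {a // a ∈ D}, ∃ d' ∈ D, p • d' = d.1 :=
      fun d => hdiv p hp.pos d.1 d.2
    let next : {a // a ∈ D} → {a // a ∈ D} :=
      fun d => ⟨(hstep d).choose, (hstep d).choose_spec.1⟩
    refine ⟨fun k => (next^[k] ⟨x, hxD⟩).1, rfl, fun k => (next^[k] ⟨x, hxD⟩).2, fun k => ?_⟩
    show (p : ℤ) • (next^[k + 1] ⟨x, hxD⟩).1 = (next^[k] ⟨x, hxD⟩).1
    rw [Function.iterate_succ_apply', natCast_zsmul]
    exact (hstep _).choose_spec.2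
  have hch : ∀ k j, (p : ℤ) ^ j • Y (k + j) = Y k := by
    intro k j
    induction j with
    | zero => simp
    | succ j ih =>
      have harith : k + (j + 1) = (k + j) + 1 := rfl
      rw [harith, pow_succ, mul_zsmul, hYs (k + j)]
      exact ih
  have hYx : ∀ k, (p : ℤ) ^ k • Y k = x := by
    intro k
    have := hch 0 k
    rwa [Nat.zero_add, hY0] at this
  have hannY : ∀ k, (p : ℤ) ^ (k + E) • Y k = 0 := by
    intro k
    rw [add_comm k E, pow_add, mul_zsmul, hYx k]
    exact hExZ
  -- the Prüfer-like subgroup W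
  have hmono : Monotone (fun k => AddSubgroup.zmultiples (Y k)) :=
    monotone_nat_of_le_succ fun k =>
      AddSubgroup.zmultiples_le.mpr (AddSubgroup.mem_zmultiples_iff.mpr ⟨(p : ℤ), hYs k⟩)
  set W := ⨆ k, AddSubgroup.zmultiples (Y k) with hWdef
  have hmemW : ∀ w, w ∈ W ↔ ∃ k, w ∈ AddSubgroup.zmultiples (Y k) := fun w =>
    AddSubgroup.mem_iSup_of_directed hmono.directed_le
  have hYW : ∀ k, Y k ∈ W := fun k =>
    (hmemW _).mpr ⟨k, AddSubgroup.mem_zmultiples _⟩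
  -- annihilator computations
  have ann0 : ∀ c : ℤ, c • x = 0 → (p : ℤ) ^ E ∣ c := by
    intro c hc
    set g : ℕ := Int.gcd c ((p : ℤ) ^ E) with hgdef
    have hgnat : g ∣ p ^ E := by
      have h1 : (g : ℤ) ∣ ((p ^ E : ℕ) : ℤ) := by push_cast; exact Int.gcd_dvd_right _ _
      exact_mod_cast h1
    obtain ⟨v, hvE, hgv⟩ := (Nat.dvd_prime_pow hp).mp hgnat
    have hbez : (g : ℤ) = c * Int.gcdA c ((p : ℤ) ^ E) + (p : ℤ) ^ E * Int.gcdB c ((p : ℤ) ^ E) :=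
      Int.gcd_eq_gcd_ab c ((p : ℤ) ^ E)
    have hgz : ((p : ℤ)) ^ v = (g : ℤ) := by rw [hgv]; push_cast; ring
    have hvx : (p : ℤ) ^ v • x = 0 := by
      rw [hgz, hbez, add_zsmul, mul_comm c, mul_zsmul, hc, zsmul_zero,
        mul_comm ((p : ℤ) ^ E), mul_zsmul, hExZ, zsmul_zero, add_zero]
    have hvEeq : v = E := by
      by_contra hne
      exact hminZ v (lt_of_le_of_ne hvE hne) hvx
    have hdv : (g : ℤ) ∣ c := Int.gcd_dvd_left _ _
    rw [← hgz, hvEeq] at hdv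
    exact hdv
  have ann : ∀ (k : ℕ) (c : ℤ), c • Y k = 0 → (p : ℤ) ^ (k + E) ∣ c := by
    intro k
    induction k with
    | zero =>
      intro c hc
      rw [hY0] at hc
      simpa using ann0 c hc
    | succ k ih =>
      intro c hc
      have hc' : c • Y k = 0 := by
        rw [← hYs k, smul_comm, hc, zsmul_zero]
      obtain ⟨d, hd⟩ := ih c hc'
      have hdx : (d * (p : ℤ) ^ F) • x = 0 := by
        have h2 : (p : ℤ) ^ (k + E) • Y (k + 1) = (p : ℤ) ^ F • x := by
          have harith : k + E = F + (k + 1) := by omega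
          rw [harith, pow_add, mul_zsmul, hYx (k + 1)]
        have h1 : c • Y (k + 1) = (d * (p : ℤ) ^ F) • x := by
          rw [hd, mul_comm ((p : ℤ) ^ (k + E)) d, mul_zsmul, h2, ← mul_zsmul]
        rw [← h1]
        exact hc
      obtain ⟨d', hd'⟩ : (p : ℤ) ∣ d := by
        have h3 : (p : ℤ) ^ E ∣ d * (p : ℤ) ^ F := ann0 _ hdx
        rw [hEF, pow_succ, mul_comm d] at h3
        have hne : ((p : ℤ)) ^ F ≠ 0 := pow_ne_zero _ hpne
        exact (mul_dvd_mul_iff_left hne).mp h3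
      exact ⟨d', by rw [hd, hd']; ring⟩
  -- structure lemma: elements of W killed by p^E lie in ⟨x⟩
  have SL : ∀ w, w ∈ W → (p : ℤ) ^ E • w = 0 → w ∈ AddSubgroup.zmultiples x := by
    intro w hw h0
    obtain ⟨k, hk⟩ := (hmemW w).mp hw
    obtain ⟨c, hc⟩ := AddSubgroup.mem_zmultiples_iff.mp hk
    have h1 : ((p : ℤ) ^ E * c) • Y k = 0 := by rw [mul_zsmul, hc]; exact h0
    obtain ⟨d, hd⟩ := ann k _ h1
    have hne : ((p : ℤ)) ^ E ≠ 0 := pow_ne_zero _ hpne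
    have hcd : c = (p : ℤ) ^ k * d := by
      apply mul_left_cancel₀ hne
      rw [hd]; ring
    rw [AddSubgroup.mem_zmultiples_iff]
    refine ⟨d, ?_⟩
    rw [← hc, hcd, mul_comm ((p : ℤ) ^ k) d, mul_zsmul, hYx k]
  -- dichotomy lemma
  have DICH : ∀ s, s ∈ W → ((p : ℤ) ^ F • s = 0 ∨ x ∈ AddSubgroup.zmultiples s) := by
    intro s hs
    obtain ⟨k, hk⟩ := (hmemW s).mp hs
    obtain ⟨c, hc⟩ := AddSubgroup.mem_zmultiples_iff.mp hk
    set g : ℕ := Int.gcd c ((p : ℤ) ^ (k + E)) with hgdef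
    have hgnat : g ∣ p ^ (k + E) := by
      have h1 : (g : ℤ) ∣ ((p ^ (k + E) : ℕ) : ℤ) := by push_cast; exact Int.gcd_dvd_right _ _
      exact_mod_cast h1
    obtain ⟨v, hvE, hgv⟩ := (Nat.dvd_prime_pow hp).mp hgnat
    have hbez : (g : ℤ) = c * Int.gcdA c ((p : ℤ) ^ (k + E))
        + (p : ℤ) ^ (k + E) * Int.gcdB c ((p : ℤ) ^ (k + E)) :=
      Int.gcd_eq_gcd_ab c ((p : ℤ) ^ (k + E))
    have hgz : ((p : ℤ)) ^ v = (g : ℤ) := by rw [hgv]; push_cast; ring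
    have hpv : (p : ℤ) ^ v • Y k = Int.gcdA c ((p : ℤ) ^ (k + E)) • s := by
      rw [hgz, hbez, add_zsmul, mul_comm c, mul_zsmul, hc,
        mul_comm ((p : ℤ) ^ (k + E)), mul_zsmul, hannY k, zsmul_zero, add_zero]
    rcases le_or_gt v k with hvk | hvk
    · right
      rw [AddSubgroup.mem_zmultiples_iff]
      refine ⟨(p : ℤ) ^ (k - v) * Int.gcdA c ((p : ℤ) ^ (k + E)), ?_⟩
      rw [mul_zsmul, ← hpv, ← mul_zsmul, ← pow_add]
      have harith : k - v + v = k := by omega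
      rw [harith, hYx k]
    · left
      obtain ⟨d, hd⟩ : ((p : ℤ)) ^ v ∣ c := by rw [hgz]; exact Int.gcd_dvd_left _ _
      rw [← hc, hd, ← mul_zsmul]
      have h4 : (p : ℤ) ^ (F + v) = (p : ℤ) ^ (F + v - (k + E)) * (p : ℤ) ^ (k + E) := by
        rw [← pow_add]
        congr 1
        omega
      have h5 : (p : ℤ) ^ F * ((p : ℤ) ^ v * d)
          = (d * (p : ℤ) ^ (F + v - (k + E))) * (p : ℤ) ^ (k + E) := by
        calc (p : ℤ) ^ F * ((p : ℤ) ^ v * d) = (p : ℤ) ^ (F + v) * d := by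
              rw [pow_add]; ring
          _ = (d * (p : ℤ) ^ (F + v - (k + E))) * (p : ℤ) ^ (k + E) := by rw [h4]; ring
      rw [h5, mul_zsmul, hannY k, zsmul_zero]
  -- divisibility of W
  have DL : ∀ N : ℕ, N ≠ 0 → ∀ k, ∃ u ∈ W, (N : ℤ) • u = Y k := by
    intro N hN k
    set a := N.factorization p with hadef
    set m := N / p ^ a with hmdef
    have hfac : p ^ a * m = N := Nat.ordProj_mul_ordCompl_eq_self N p
    have hcop : Nat.Coprime m (p ^ (k + a + E)) :=
      ((Nat.coprime_ordCompl hp hN).symm).pow_right _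
    obtain ⟨b, t, hbt⟩ := hcop.isCoprime
    have hbt' : b * (m : ℤ) + t * (p : ℤ) ^ (k + a + E) = 1 := by
      push_cast at hbt
      exact hbt
    refine ⟨b • Y (k + a), AddSubgroup.zsmul_mem W (hYW (k + a)) b, ?_⟩
    rw [← mul_zsmul]
    have hNZ : (N : ℤ) = (p : ℤ) ^ a * (m : ℤ) := by rw [← hfac]; push_cast; ring
    have hid : (N : ℤ) * b = (p : ℤ) ^ a + (-((p : ℤ) ^ a * t)) * (p : ℤ) ^ (k + a + E) := by
      rw [hNZ]
      linear_combination (p : ℤ) ^ a * hbt'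
    have hK0 : (p : ℤ) ^ (k + a + E) • Y (k + a) = 0 := hannY (k + a)
    rw [hid, add_zsmul, mul_zsmul, hK0, zsmul_zero, add_zero]
    exact hch k a
  have hE0 : (p : ℤ) ^ E • φ x = 0 := by rw [← map_zsmul, hExZ, map_zero]
  -- split on the hypothesis
  rcases hφ with hRIN | hLIN
  · -- RIN case
    have hn0 : W.relIndex (W ⊔ W.map φ) ≠ 0 := hRIN W
    set n₀ := W.relIndex (W ⊔ W.map φ) with hn0def
    set a := n₀.factorization p with hadef
    set m := n₀ / p ^ a with hmdef
    have hfac : p ^ a * m = n₀ := Nat.ordProj_mul_ordCompl_eq_self n₀ p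
    have hcop : Nat.Coprime m (p ^ (a + E)) :=
      ((Nat.coprime_ordCompl hp hn0).symm).pow_right _
    obtain ⟨b, t, hbt⟩ := hcop.isCoprime
    have hbt' : b * (m : ℤ) + t * (p : ℤ) ^ (a + E) = 1 := by
      push_cast at hbt
      exact hbt
    set z := φ (Y a) with hzdef
    have hzK : z ∈ W ⊔ W.map φ :=
      AddSubgroup.mem_sup_right (AddSubgroup.mem_map_of_mem φ (hYW a))
    have h1 : (n₀ : ℤ) • z ∈ W := relindex_zsmul_mem W _ z hzK
    have h2 : (p : ℤ) ^ (a + E) • z = 0 := by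
      rw [hzdef, ← map_zsmul, hannY a, map_zero]
    have h3 : (p : ℤ) ^ a • z ∈ W := by
      have hzz : (p : ℤ) ^ a • z = b • ((n₀ : ℤ) • z) := by
        rw [← mul_zsmul]
        have hNZ : (n₀ : ℤ) = (p : ℤ) ^ a * (m : ℤ) := by rw [← hfac]; push_cast; ring
        have hid : b * (n₀ : ℤ) = (p : ℤ) ^ a + (-(t * (p : ℤ) ^ a)) * (p : ℤ) ^ (a + E) := by
          rw [hNZ]
          linear_combination (p : ℤ) ^ a * hbt'
        rw [hid, add_zsmul, mul_zsmul, h2, zsmul_zero, add_zero]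
      rw [hzz]
      exact AddSubgroup.zsmul_mem W h1 b
    have h4 : φ x = (p : ℤ) ^ a • z := by
      have hxa : (p : ℤ) ^ a • Y a = x := by
        have := hch 0 a
        rwa [Nat.zero_add, hY0] at this
      rw [← hxa, map_zsmul, hzdef]
    apply SL (φ x) _ hE0
    rw [h4]
    exact h3
  · -- LIN case
    by_cases hfw : φ x ∈ W
    · exact SL (φ x) hfw hE0
    · exfalso
      have hn0 : (W.map φ).relIndex W ≠ 0 := hLIN W
      obtain ⟨u, huW, hu⟩ := DL ((W.map φ).relIndex W) hn0 E
      have h1 : (((W.map φ).relIndex W : ℤ)) • u ∈ W.map φ :=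
        relindex_zsmul_mem (W.map φ) W u huW
      rw [hu] at h1
      obtain ⟨s, hsW, hs⟩ := AddSubgroup.mem_map.mp h1
      rcases DICH s hsW with h | h
      · apply hx0
        have hYE : (p : ℤ) ^ F • Y E = 0 := by rw [← hs, ← map_zsmul, h, map_zero]
        have hxx : x = (p : ℤ) • ((p : ℤ) ^ F • Y E) := by
          rw [← mul_zsmul, ← pow_succ', ← hEF]
          exact (hYx E).symm
        rw [hxx, hYE, zsmul_zero]
      · obtain ⟨c, hcs⟩ := AddSubgroup.mem_zmultiples_iff.mp h
        apply hfw
        rw [← hcs, map_zsmul, hs]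
        exact AddSubgroup.zsmul_mem W (hYW E) c

/-- If `D` is a divisible torsion subgroup of an abelian group `A` and `φ` is an inertial
or LIN endomorphism of `A`, then `φ` maps every subgroup of `D` into itself; in
particular `φ(D) ⊆ D` and `φ` acts as a multiplication on `D`. -/
theorem stmt_17 {A : Type*} [AddCommGroup A] (D : AddSubgroup A)
    (hdiv : ∀ n : ℕ, 0 < n → ∀ d ∈ D, ∃ d' ∈ D, n • d' = d)
    (htor : ∀ d ∈ D, ∃ n : ℕ, 0 < n ∧ n • d = 0)
    (φ : A →+ A) (hφ : IsInertial φ ∨ IsLIN φ) :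
    ∀ X : AddSubgroup A, X ≤ D → X.map φ ≤ X := by
  have key : ∀ n : ℕ, 0 < n → ∀ x, x ∈ D → n • x = 0 → φ x ∈ AddSubgroup.zmultiples x := by
    intro n
    induction n using Nat.strong_induction_on with
    | _ n ih =>
      intro hn x hxD hnx
      by_cases hx0 : x = 0
      · rw [hx0, map_zero]; exact zero_mem _
      rcases eq_or_lt_of_le (show 1 ≤ n from hn) with h1 | h2
      · exfalso
        apply hx0
        rw [← h1] at hnx
        simpa using hnx
      · set p := n.minFac with hpdef
        have hp : p.Prime := Nat.minFac_prime (by omega)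
        set a := n.factorization p with hadef
        set m := n / p ^ a with hmdef
        have hfac : p ^ a * m = n := Nat.ordProj_mul_ordCompl_eq_self n p
        by_cases hm1 : m = 1
        · apply core_aux D hdiv φ hφ hp hxD hx0
          refine ⟨a, ?_⟩
          have hpan : p ^ a = n := by rw [← hfac, hm1, mul_one]
          rw [hpan]
          exact hnx
        · have hm0 : m ≠ 0 := by
            intro h
            rw [h, mul_zero] at hfac
            omega
          have ha1 : 0 < a := hp.factorization_pos_of_dvd (by omega) (Nat.minFac_dvd n)
          have hpa1 : 1 < p ^ a := by
            have h2le := hp.two_le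
            calc 1 < p := by omega
              _ ≤ p ^ a := Nat.le_self_pow (by omega) p
          have hm_lt : m < n := by
            calc m = 1 * m := (one_mul m).symm
              _ < p ^ a * m := (Nat.mul_lt_mul_right (Nat.pos_of_ne_zero hm0)).mpr hpa1
              _ = n := hfac
          have hpa_lt : p ^ a < n := by
            calc p ^ a = p ^ a * 1 := (mul_one _).symm
              _ < p ^ a * m := (Nat.mul_lt_mul_left (by omega)).mpr (lt_of_le_of_ne (Nat.one_le_iff_ne_zero.mpr hm0) (Ne.symm hm1))
              _ = n := hfac
          have hcop : Nat.Coprime (p ^ a) m := (Nat.coprime_ordCompl hp (by omega)).pow_left _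
          obtain ⟨u, v, huv⟩ := hcop.isCoprime
          set x1 := (v * (m : ℤ)) • x with hx1def
          set x2 := (u * ((p ^ a : ℕ) : ℤ)) • x with hx2def
          have hxsum : x = x1 + x2 := by
            rw [hx1def, hx2def, ← add_zsmul]
            have hone : v * (m : ℤ) + u * ((p ^ a : ℕ) : ℤ) = 1 := by linear_combination huv
            rw [hone, one_zsmul]
          have hnzx : (n : ℤ) • x = 0 := by rw [natCast_zsmul]; exact hnx
          have h1 : (p ^ a) • x1 = 0 := by
            rw [hx1def, ← natCast_zsmul, ← mul_zsmul]
            have hcast : ((p ^ a : ℕ) : ℤ) * (v * (m : ℤ)) = v * (n : ℤ) := by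
              rw [← hfac]; push_cast; ring
            rw [hcast, mul_zsmul, hnzx, zsmul_zero]
          have h2' : m • x2 = 0 := by
            rw [hx2def, ← natCast_zsmul, ← mul_zsmul]
            have hcast : ((m : ℕ) : ℤ) * (u * ((p ^ a : ℕ) : ℤ)) = u * (n : ℤ) := by
              rw [← hfac]; push_cast; ring
            rw [hcast, mul_zsmul, hnzx, zsmul_zero]
          have hx1D : x1 ∈ D := AddSubgroup.zsmul_mem D hxD _
          have hx2D : x2 ∈ D := AddSubgroup.zsmul_mem D hxD _
          have hφ1 : φ x1 ∈ AddSubgroup.zmultiples x1 :=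
            ih (p ^ a) hpa_lt (by omega) x1 hx1D h1
          have hφ2 : φ x2 ∈ AddSubgroup.zmultiples x2 :=
            ih m hm_lt (Nat.pos_of_ne_zero hm0) x2 hx2D h2'
          have hle1 : AddSubgroup.zmultiples x1 ≤ AddSubgroup.zmultiples x :=
            AddSubgroup.zmultiples_le.mpr
              (AddSubgroup.mem_zmultiples_iff.mpr ⟨v * (m : ℤ), hx1def.symm⟩)
          have hle2 : AddSubgroup.zmultiples x2 ≤ AddSubgroup.zmultiples x :=
            AddSubgroup.zmultiples_le.mpr
              (AddSubgroup.mem_zmultiples_iff.mpr ⟨u * ((p ^ a : ℕ) : ℤ), hx2def.symm⟩)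
          have hsum2 : φ x = φ x1 + φ x2 := by rw [hxsum, map_add]
          rw [hsum2]
          exact add_mem (hle1 hφ1) (hle2 hφ2)
  intro X hXD w hw
  obtain ⟨x, hxX, rfl⟩ := AddSubgroup.mem_map.mp hw
  obtain ⟨n, hn, hnx⟩ := htor x (hXD hxX)
  exact AddSubgroup.zmultiples_le.mpr hxX (key n hn x (hXD hxX) hnx)
end

section
/- Let A be an abelian group, let φ be an endomorphism of A which is either inertial (RIN) or LIN, and let a ∈ A. Then the torsion subgroup of the smallest φ-invariant subgroup of A containing a (the additive subgroup generated by {φ^k(a) : k ≥ 0}) is finite. -/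
open Polynomial

section Helpers

variable {A : Type*} [AddCommGroup A]

private lemma relindex_zero_of_seq (H K : AddSubgroup A) (f : ℕ → A) (hfK : ∀ k, f k ∈ K)
    (hf : ∀ k l, k ≠ l → f k - f l ∉ H) : H.relIndex K = 0 := by
  have hinj : Function.Injective
      (fun k => (QuotientAddGroup.mk (⟨f k, hfK k⟩ : K) : K ⧸ H.addSubgroupOf K)) := by
    intro k l h
    by_contra hne
    rw [QuotientAddGroup.eq, AddSubgroup.mem_addSubgroupOf] at h
    have h2 : f l - f k ∈ H := by
      have : ((-(⟨f k, hfK k⟩ : K) + ⟨f l, hfK l⟩ : K) : A) = f l - f k := by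
        push_cast
        abel
      rwa [this] at h
    exact hf l k (fun e => hne e.symm) h2
  haveI := Infinite.of_injective _ hinj
  show (H.addSubgroupOf K).index = 0
  rw [AddSubgroup.index_eq_card]
  exact Nat.card_eq_zero_of_infinite

private lemma finite_span_torsion (p : ℕ) (hp : 0 < p) (s : Finset A)
    (hs : ∀ x ∈ s, p • x = 0) :
    ((Submodule.span ℤ (s : Set A) : Submodule ℤ A) : Set A).Finite := by
  classical
  induction s using Finset.induction_on with
  | empty => simp
  | @insert x t hx ih =>
      have hx0 : p • x = 0 := hs x (Finset.mem_insert_self _ _)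
      have ht : ∀ y ∈ t, p • y = 0 := fun y hy => hs y (Finset.mem_insert_of_mem hy)
      have h1 : ((Submodule.span ℤ ({x} : Set A) : Submodule ℤ A) : Set A).Finite := by
        have hsub : ((Submodule.span ℤ ({x} : Set A) : Submodule ℤ A) : Set A) ⊆
            (fun n : ℕ => n • x) '' (Set.Iio p) := by
          rintro y hy
          rw [SetLike.mem_coe, Submodule.mem_span_singleton] at hy
          obtain ⟨c, rfl⟩ := hy
          have hppos : (0 : ℤ) < (p : ℤ) := by exact_mod_cast hp
          have hnn : (0 : ℤ) ≤ c % (p : ℤ) := Int.emod_nonneg c hppos.ne'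
          have hlt : c % (p : ℤ) < (p : ℤ) := Int.emod_lt_of_pos c hppos
          refine ⟨(c % (p : ℤ)).toNat, ?_, ?_⟩
          · simp only [Set.mem_Iio]
            omega
          · have hpx : (p : ℤ) • x = 0 := by rw [natCast_zsmul]; exact hx0
            have hcx : c • x = (c % (p : ℤ)) • x := by
              conv_lhs => rw [← Int.mul_ediv_add_emod c (p : ℤ)]
              rw [add_smul, mul_comm, mul_smul, hpx, smul_zero, zero_add]
            show ((c % (p : ℤ)).toNat) • x = c • x
            rw [hcx]
            conv_rhs => rw [← Int.toNat_of_nonneg hnn]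
            exact (natCast_zsmul x _).symm
        exact Set.Finite.subset ((Set.finite_Iio p).image _) hsub
      rw [Finset.coe_insert, Submodule.span_insert]
      rw [Submodule.coe_sup]
      exact Set.Finite.add h1 (ih ht)

private lemma exists_prime_infinite :
    ∀ N : ℕ, 0 < N → ∀ B : AddSubgroup A, (∀ x ∈ B, N • x = 0) →
      {x : A | x ∈ B}.Infinite → ∃ p : ℕ, p.Prime ∧ {x : A | x ∈ B ∧ p • x = 0}.Infinite := by
  intro N
  induction N using Nat.strong_induction_on with
  | _ N ih =>
    intro hN B hbd hinf
    rcases eq_or_ne N 1 with h1 | h1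
    · exfalso
      apply hinf
      have hsub : {x : A | x ∈ B} ⊆ {0} := by
        intro x hx
        have h2 := hbd x hx
        rw [h1, one_smul] at h2
        simp [h2]
      exact Set.Finite.subset (Set.finite_singleton 0) hsub
    · have hpp : N.minFac.Prime := Nat.minFac_prime h1
      set p := N.minFac with hp
      by_cases hK : {x : A | x ∈ B ∧ p • x = 0}.Infinite
      · exact ⟨p, hpp, hK⟩
      rw [Set.not_infinite] at hK
      set f : A →+ A := AddMonoidHom.mk' (fun x => p • x) (fun a b => smul_add p a b) with hf
      set B' := B.map f with hB'
      have hB'le : ∀ y ∈ B', y ∈ B := by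
        rintro y hy
        rcases AddSubgroup.mem_map.mp hy with ⟨x, hxB, rfl⟩
        exact AddSubgroup.nsmul_mem B hxB p
      have hdvd : p ∣ N := Nat.minFac_dvd N
      have hbd' : ∀ y ∈ B', (N / p) • y = 0 := by
        rintro y hy
        rcases AddSubgroup.mem_map.mp hy with ⟨x, hxB, rfl⟩
        show (N / p) • (p • x) = 0
        rw [← mul_smul, Nat.div_mul_cancel hdvd]
        exact hbd x hxB
      have hB'inf : {y : A | y ∈ B'}.Infinite := by
        by_contra hfin
        rw [Set.not_infinite] at hfin
        apply hinf
        have hcover : {x : A | x ∈ B} ⊆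
            ⋃ y ∈ {y : A | y ∈ B'}, {x : A | x ∈ B ∧ p • x = y} := by
          intro x hx
          exact Set.mem_biUnion (AddSubgroup.mem_map_of_mem f hx) ⟨hx, rfl⟩
        refine Set.Finite.subset (Set.Finite.biUnion hfin ?_) hcover
        intro y _
        rcases Set.eq_empty_or_nonempty {x : A | x ∈ B ∧ p • x = y} with he | ⟨x₀, hx₀⟩
        · rw [he]; exact Set.finite_empty
        · have hsub : {x : A | x ∈ B ∧ p • x = y} ⊆
              (fun z => x₀ + z) '' {x : A | x ∈ B ∧ p • x = 0} := by
            intro x hx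
            refine ⟨x - x₀, ⟨AddSubgroup.sub_mem B hx.1 hx₀.1, ?_⟩, by
              show x₀ + (x - x₀) = x
              rw [add_comm, sub_add_cancel]⟩
            rw [smul_sub, hx.2, hx₀.2, sub_self]
          exact Set.Finite.subset (hK.image _) hsub
      have hdivlt : N / p < N := Nat.div_lt_self hN hpp.two_le
      have hdivpos : 0 < N / p := Nat.div_pos (Nat.le_of_dvd hN hdvd) hpp.pos
      obtain ⟨q, hq, hqinf⟩ := ih (N / p) hdivlt hdivpos B' hbd' hB'inf
      exact ⟨q, hq, hqinf.mono (fun x hx => ⟨hB'le x hx.1, hx.2⟩)⟩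

section Mod

variable [Module (Polynomial ℤ) A]

private lemma Xpow_smul (φ : A →+ A) (hX : ∀ x : A, (X : Polynomial ℤ) • x = φ x)
    (k : ℕ) (x : A) : (X ^ k : Polynomial ℤ) • x = (⇑φ)^[k] x := by
  induction k with
  | zero => simp
  | succ n ihn =>
      rw [pow_succ', mul_smul, hX, ihn]
      exact (Function.iterate_succ_apply' φ n x).symm

private lemma smul_expand (f : Polynomial ℤ) (x : A) :
    f • x = ∑ i ∈ Finset.range (f.natDegree + 1), f.coeff i • ((X ^ i : Polynomial ℤ) • x) := by
  conv_lhs => rw [f.as_sum_range]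
  rw [Finset.sum_smul]
  refine Finset.sum_congr rfl fun i _ => ?_
  rw [← C_mul_X_pow_eq_monomial, mul_smul,
    show (C (f.coeff i) : Polynomial ℤ) = ((f.coeff i : Polynomial ℤ)) from by simp,
    Int.cast_smul_eq_zsmul]

private lemma mem_closure_poly (φ : A →+ A) (hX : ∀ x : A, (X : Polynomial ℤ) • x = φ x)
    (b : A) (s : ℕ → ℕ) (x : A)
    (hx : x ∈ AddSubgroup.closure (Set.range fun k => (⇑φ)^[s k] b)) :
    ∃ f : Polynomial ℤ, (∀ i, i ∉ Set.range s → f.coeff i = 0) ∧ x = f • b := by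
  refine AddSubgroup.closure_induction ?_ ?_ ?_ ?_ hx
  · rintro y ⟨k, rfl⟩
    refine ⟨X ^ (s k), fun i hi => ?_, (Xpow_smul φ hX _ b).symm⟩
    rw [coeff_X_pow, if_neg]
    intro heq
    exact hi ⟨k, heq.symm⟩
  · exact ⟨0, by simp, by simp⟩
  · rintro u v _ _ ⟨f, hf, rfl⟩ ⟨g, hg, rfl⟩
    exact ⟨f + g, fun i hi => by rw [coeff_add, hf i hi, hg i hi, add_zero],
      (add_smul f g b).symm⟩
  · rintro u _ ⟨f, hf, rfl⟩
    exact ⟨-f, fun i hi => by rw [coeff_neg, hf i hi, neg_zero], (neg_smul f b).symm⟩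


private lemma W_finite (p : ℕ) (hpp : p.Prime) (W : Submodule (Polynomial ℤ) A)
    (hWfg : W.FG) (hWp : ∀ x ∈ W, p • x = 0)
    (hbad : ∀ b ∈ W, ∃ f : Polynomial ℤ, f • b = 0 ∧ ∃ i, ¬ (p : ℤ) ∣ f.coeff i) :
    {x : A | x ∈ W}.Finite := by
  classical
  haveI : NeZero p := ⟨hpp.pos.ne'⟩
  obtain ⟨s, hs⟩ := hWfg
  have hmem : ∀ x ∈ s, x ∈ W := fun x hx => hs ▸ Submodule.subset_span hx
  have hch := fun (x : {y // y ∈ s}) => hbad x.1 (hmem x.1 x.2)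
  choose F hF0 hFnd using hch
  set Fp : Polynomial ℤ := ∏ x ∈ s.attach, F x with hFp
  have hFw : ∀ w ∈ W, Fp • w = 0 := by
    intro w hw
    rw [← hs] at hw
    induction hw using Submodule.span_induction with
    | mem y hy =>
        have hy' : y ∈ s := hy
        have hdvd : F ⟨y, hy'⟩ ∣ Fp := Finset.dvd_prod_of_mem _ (Finset.mem_attach _ _)
        obtain ⟨g, hg⟩ := hdvd
        rw [hg, mul_comm, mul_smul, hF0 ⟨y, hy'⟩, smul_zero]
    | zero => simp
    | add u v hu hv ihu ihv => rw [smul_add, ihu, ihv, add_zero]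
    | smul c u hu ihu => rw [← mul_smul, mul_comm, mul_smul, ihu, smul_zero]
  have hCp : Prime (C (p : ℤ)) := Polynomial.prime_C_iff.mpr (Nat.prime_iff_prime_int.mp hpp)
  have hFnd' : ∃ i, ¬ (p : ℤ) ∣ Fp.coeff i := by
    by_contra hcon
    push_neg at hcon
    have hdvdF : C (p : ℤ) ∣ Fp := (C_dvd_iff_dvd_coeff _ _).mpr (by
      intro i
      simpa using hcon i)
    rcases (hCp.dvd_finset_prod_iff _).mp hdvdF with ⟨x, _, hdvdx⟩
    have h2 := (C_dvd_iff_dvd_coeff _ _).mp hdvdx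
    obtain ⟨i, hi⟩ := hFnd x
    exact hi (by simpa using h2 i)
  set G : Polynomial (ZMod p) := Fp.map (Int.castRingHom (ZMod p)) with hG
  have hGne : G ≠ 0 := by
    obtain ⟨i₀, hi₀⟩ := hFnd'
    intro hz
    apply hi₀
    have h3 : G.coeff i₀ = 0 := by rw [hz]; simp
    rw [hG, coeff_map] at h3
    exact (ZMod.intCast_zmod_eq_zero_iff_dvd _ _).mp h3
  set d : ℕ := G.natDegree with hd
  set cd : ℤ := Fp.coeff d with hcd0
  have hcd : ¬ (p : ℤ) ∣ cd := by
    intro hdv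
    have h4 : G.coeff d = 0 := by
      rw [hG, coeff_map]
      exact (ZMod.intCast_zmod_eq_zero_iff_dvd _ _).mpr hdv
    exact (Polynomial.leadingCoeff_ne_zero.mpr hGne) h4
  have hhi : ∀ i, d < i → (p : ℤ) ∣ Fp.coeff i := by
    intro i hi
    have h5 : G.coeff i = 0 := Polynomial.coeff_eq_zero_of_natDegree_lt hi
    rw [hG, coeff_map] at h5
    exact (ZMod.intCast_zmod_eq_zero_iff_dvd _ _).mp h5
  have hdn : d ≤ Fp.natDegree := Polynomial.natDegree_map_le
  have hcop : IsCoprime ((p : ℤ)) cd := by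
    rw [Int.isCoprime_iff_gcd_eq_one]
    by_contra hg
    have hgd : (Int.gcd (p : ℤ) cd) ∣ p := by
      have h6 := Int.gcd_dvd_left (a := ((p : ℤ))) (b := cd)
      exact_mod_cast h6
    rcases hpp.eq_one_or_self_of_dvd _ hgd with h | h
    · exact hg h
    · apply hcd
      have h7 := Int.gcd_dvd_right (a := ((p : ℤ))) (b := cd)
      rw [h] at h7
      exact_mod_cast h7
  obtain ⟨α, β, hαβ⟩ := hcop
  -- u * cd = 1 - α * p
  set u : ℤ := β with hu0
  have hu : u * cd = 1 + (p : ℤ) * (-α) := by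
    have : α * (p : ℤ) + β * cd = 1 := hαβ
    ring_nf
    ring_nf at this
    linarith
  -- the finite spanning set
  set Efin : Finset A := s.biUnion
    (fun x => (Finset.range d).image (fun j => (X ^ j : Polynomial ℤ) • x)) with hEfin
  set E : Submodule ℤ A := Submodule.span ℤ (Efin : Set A) with hE
  have hpE : ∀ y ∈ Efin, p • y = 0 := by
    intro y hy
    rw [hEfin] at hy
    rcases Finset.mem_biUnion.mp hy with ⟨x, hxs, hy2⟩
    rcases Finset.mem_image.mp hy2 with ⟨j, _, rfl⟩
    rw [smul_comm]
    rw [hWp x (hmem x hxs), smul_zero]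
  have hpXsmul : ∀ (x : A), x ∈ W → ∀ (j : ℕ) (z : ℤ), (p : ℤ) ∣ z →
      z • ((X ^ j : Polynomial ℤ) • x) = 0 := by
    rintro x hxW j z ⟨w, rfl⟩
    rw [mul_comm, mul_smul]
    have : ((p : ℤ)) • ((X ^ j : Polynomial ℤ) • x) = 0 := by
      rw [natCast_zsmul, smul_comm, hWp x hxW, smul_zero]
    rw [this, smul_zero]
  have hspan : ∀ x ∈ s, ∀ m : ℕ, ((X ^ m : Polynomial ℤ) • x) ∈ E := by
    intro x hxs m
    induction m using Nat.strong_induction_on with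
    | _ m ihm =>
      by_cases hmd : m < d
      · refine Submodule.subset_span ?_
        rw [hEfin]
        exact_mod_cast Finset.mem_biUnion.mpr ⟨x, hxs,
          Finset.mem_image.mpr ⟨m, Finset.mem_range.mpr hmd, rfl⟩⟩
      · push_neg at hmd
        have hx0 : Fp • x = 0 := hFw x (hmem x hxs)
        have hexp : ∑ i ∈ Finset.range (Fp.natDegree + 1),
            Fp.coeff i • ((X ^ (m - d + i) : Polynomial ℤ) • x) = 0 := by
          have hcalc : ∑ i ∈ Finset.range (Fp.natDegree + 1),
              Fp.coeff i • ((X ^ (m - d + i) : Polynomial ℤ) • x)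
              = (X ^ (m - d) : Polynomial ℤ) • (Fp • x) := by
            conv_rhs => rw [smul_expand Fp x]
            rw [Finset.smul_sum]
            refine Finset.sum_congr rfl fun i _ => ?_
            rw [smul_comm ((X : Polynomial ℤ) ^ (m - d)) (Fp.coeff i), ← mul_smul, ← pow_add]
          rw [hcalc, hx0, smul_zero]
        have hd_mem : d ∈ Finset.range (Fp.natDegree + 1) :=
          Finset.mem_range.mpr (Nat.lt_succ_of_le hdn)
        rw [← Finset.add_sum_erase _ _ hd_mem, Nat.sub_add_cancel hmd] at hexp
        have hmain : cd • ((X ^ m : Polynomial ℤ) • x)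
            = -∑ i ∈ (Finset.range (Fp.natDegree + 1)).erase d,
                Fp.coeff i • ((X ^ (m - d + i) : Polynomial ℤ) • x) :=
          eq_neg_of_add_eq_zero_left hexp
        have hsum_mem : (∑ i ∈ (Finset.range (Fp.natDegree + 1)).erase d,
            Fp.coeff i • ((X ^ (m - d + i) : Polynomial ℤ) • x)) ∈ E := by
          refine Submodule.sum_mem _ ?_
          intro i hi
          have hine : i ≠ d := (Finset.mem_erase.mp hi).1
          rcases lt_or_gt_of_ne hine with hlt | hgt
          · have hlt2 : m - d + i < m := by omega
            exact Submodule.smul_mem _ _ (ihm _ hlt2)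
          · rw [hpXsmul x (hmem x hxs) _ _ (hhi i hgt)]
            exact Submodule.zero_mem _
        have hy : (X ^ m : Polynomial ℤ) • x = u • (cd • ((X ^ m : Polynomial ℤ) • x)) := by
          rw [← mul_smul]
          rw [hu, add_smul, one_smul]
          have h8 : ((p : ℤ) * (-α)) • ((X ^ m : Polynomial ℤ) • x) = 0 :=
            hpXsmul x (hmem x hxs) _ _ ⟨-α, rfl⟩
          rw [h8, add_zero]
        rw [hy, hmain]
        exact Submodule.smul_mem _ _ (Submodule.neg_mem _ hsum_mem)
  have hEstab : ∀ (c : Polynomial ℤ) (y : A), y ∈ E → c • y ∈ E := by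
    intro c y hy
    rw [hE] at hy
    induction hy using Submodule.span_induction with
    | mem z hz =>
        rcases Finset.mem_biUnion.mp (by exact_mod_cast hz) with ⟨x, hxs, hz2⟩
        rcases Finset.mem_image.mp hz2 with ⟨j, _, rfl⟩
        rw [smul_expand c]
        refine Submodule.sum_mem _ ?_
        intro i _
        rw [← mul_smul, ← pow_add]
        exact Submodule.smul_mem _ _ (hspan x hxs (i + j))
    | zero => rw [smul_zero]; exact Submodule.zero_mem _
    | add y z hy hz ihy ihz => rw [smul_add]; exact Submodule.add_mem _ ihy ihz
    | smul r y hy ihy =>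
        rw [smul_comm c r y]
        exact Submodule.smul_mem _ _ ihy
  have hWE : ∀ w ∈ W, w ∈ E := by
    intro w hw
    rw [← hs] at hw
    induction hw using Submodule.span_induction with
    | mem y hy =>
        have h9 := hspan y hy 0
        rwa [pow_zero, one_smul] at h9
    | zero => exact Submodule.zero_mem _
    | add y z hy hz ihy ihz => exact Submodule.add_mem _ ihy ihz
    | smul c y hy ihy => exact hEstab c y ihy
  refine Set.Finite.subset (finite_span_torsion p hpp.pos Efin hpE) ?_
  intro x hx
  exact hWE x hx


private theorem main_aux (φ : A →+ A) (hX : ∀ x : A, (X : Polynomial ℤ) • x = φ x)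
    (hφ : IsInertial φ ∨ IsLIN φ) (a : A) :
    {x : A | x ∈ Submodule.span (Polynomial ℤ) ({a} : Set A) ∧
      ∃ n : ℕ, 0 < n ∧ n • x = 0}.Finite := by
  classical
  by_contra hinf
  rw [← Set.not_infinite, not_not] at hinf
  set V : Submodule (Polynomial ℤ) A := Submodule.span (Polynomial ℤ) ({a} : Set A) with hV
  have hVfg : V.FG := ⟨{a}, by simp [hV]⟩
  haveI : IsNoetherian (Polynomial ℤ) V := isNoetherian_of_fg_of_noetherian V hVfg
  have hfg_of_le : ∀ (U : Submodule (Polynomial ℤ) A), U ≤ V → U.FG := by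
    intro U hU
    have h1 := IsNoetherian.noetherian (U.comap V.subtype)
    have h2 := Submodule.FG.map (f := V.subtype) h1
    rwa [Submodule.map_comap_subtype, inf_eq_right.mpr hU] at h2
  set T : Submodule (Polynomial ℤ) A :=
    { carrier := {x : A | x ∈ V ∧ ∃ n : ℕ, 0 < n ∧ n • x = 0}
      add_mem' := by
        rintro x y ⟨hxV, n, hn, hnx⟩ ⟨hyV, m, hm, hmy⟩
        refine ⟨V.add_mem hxV hyV, n * m, Nat.mul_pos hn hm, ?_⟩
        rw [smul_add]
        have e1 : (n * m) • x = 0 := by rw [mul_comm, mul_smul, hnx, smul_zero]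
        have e2 : (n * m) • y = 0 := by rw [mul_smul, hmy, smul_zero]
        rw [e1, e2, add_zero]
      zero_mem' := ⟨V.zero_mem, 1, one_pos, smul_zero 1⟩
      smul_mem' := by
        rintro c x ⟨hxV, n, hn, hnx⟩
        refine ⟨V.smul_mem c hxV, n, hn, ?_⟩
        rw [smul_comm n c x, hnx, smul_zero] } with hT
  have hTle : T ≤ V := fun x hx => hx.1
  obtain ⟨st, hst⟩ := hfg_of_le T hTle
  have hmemT : ∀ x ∈ st, (x ∈ V ∧ ∃ n : ℕ, 0 < n ∧ n • x = 0) := by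
    intro x hx
    exact (hst ▸ Submodule.subset_span hx : x ∈ T)
  have hchT := fun (x : {y // y ∈ st}) => (hmemT x.1 x.2).2
  choose nn hnn1 hnn2 using hchT
  set N : ℕ := ∏ x ∈ st.attach, nn x with hN
  have hNpos : 0 < N := Finset.prod_pos (fun x _ => hnn1 x)
  have hNT : ∀ x ∈ T, N • x = 0 := by
    intro x hx
    rw [← hst] at hx
    induction hx using Submodule.span_induction with
    | mem y hy =>
        have hy' : y ∈ st := hy
        have hdvd : nn ⟨y, hy'⟩ ∣ N := Finset.dvd_prod_of_mem _ (Finset.mem_attach _ _)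
        obtain ⟨c, hc⟩ := hdvd
        rw [hc, mul_comm, mul_smul, hnn2 ⟨y, hy'⟩, smul_zero]
    | zero => simp
    | add u v hu hv ihu ihv => rw [smul_add, ihu, ihv, add_zero]
    | smul c u hu ihu => rw [smul_comm, ihu, smul_zero]
  obtain ⟨p, hpp, hWinf⟩ := exists_prime_infinite N hNpos T.toAddSubgroup
    (fun x hx => hNT x hx) (hinf.mono (fun x hx => ⟨hx.1, hx.2⟩))
  set W : Submodule (Polynomial ℤ) A :=
    { carrier := {x : A | x ∈ T ∧ p • x = 0}
      add_mem' := by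
        rintro x y ⟨hxT, hpx⟩ ⟨hyT, hpy⟩
        exact ⟨T.add_mem hxT hyT, by rw [smul_add, hpx, hpy, add_zero]⟩
      zero_mem' := ⟨T.zero_mem, smul_zero p⟩
      smul_mem' := by
        rintro c x ⟨hxT, hpx⟩
        exact ⟨T.smul_mem c hxT, by rw [smul_comm p c x, hpx, smul_zero]⟩ } with hW
  have hWle : W ≤ V := fun x hx => hx.1.1
  have hWfg := hfg_of_le W hWle
  have hWp : ∀ x ∈ W, p • x = 0 := fun x hx => hx.2
  have hWinf' : {x : A | x ∈ W}.Infinite :=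
    hWinf.mono (fun x hx => ⟨hx.1, hx.2⟩)
  by_cases hgood : ∃ b ∈ W, ∀ f : Polynomial ℤ, f • b = 0 → ∀ i, (p : ℤ) ∣ f.coeff i
  · obtain ⟨b, hbW, hb⟩ := hgood
    set Xe : AddSubgroup A :=
      AddSubgroup.closure (Set.range fun k : ℕ => (⇑φ)^[2 * k] b) with hXe
    have hmape : Xe.map φ =
        AddSubgroup.closure (Set.range fun k : ℕ => (⇑φ)^[2 * k + 1] b) := by
      rw [hXe, AddMonoidHom.map_closure]
      congr 1
      rw [← Set.range_comp]
      refine congrArg _ ?_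
      funext k
      show φ ((⇑φ)^[2 * k] b) = (⇑φ)^[2 * k + 1] b
      exact (Function.iterate_succ_apply' φ (2 * k) b).symm
    have hone : ¬ ((p : ℤ) ∣ 1) := by
      intro hdv
      have := Int.eq_one_of_dvd_one (by positivity) hdv
      have hp1 : p = 1 := by exact_mod_cast this
      exact hpp.one_lt.ne' hp1
    have hne_even : ∀ k l : ℕ, k ≠ l →
        (⇑φ)^[2 * k + 1] b - (⇑φ)^[2 * l + 1] b ∉ Xe := by
      intro k l hkl hmem
      obtain ⟨f, hf, heq⟩ := mem_closure_poly φ hX b (fun k => 2 * k) _ hmem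
      have h0 : ((X ^ (2 * k + 1) - X ^ (2 * l + 1) - f : Polynomial ℤ)) • b = 0 := by
        rw [sub_smul, sub_smul, Xpow_smul φ hX, Xpow_smul φ hX, ← heq, sub_self]
      have hdvd := hb _ h0 (2 * k + 1)
      have hf0 : f.coeff (2 * k + 1) = 0 := hf _ (by
        rintro ⟨j, hj⟩
        replace hj : 2 * j = 2 * k + 1 := hj
        omega)
      have h1 : (2 * k + 1 : ℕ) ≠ 2 * l + 1 := by omega
      rw [coeff_sub, coeff_sub, coeff_X_pow, coeff_X_pow, if_pos rfl, if_neg h1, hf0,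
        sub_zero, sub_zero] at hdvd
      exact hone hdvd
    have hne_odd : ∀ k l : ℕ, k ≠ l →
        (⇑φ)^[2 * k] b - (⇑φ)^[2 * l] b ∉ Xe.map φ := by
      intro k l hkl hmem
      rw [hmape] at hmem
      obtain ⟨f, hf, heq⟩ := mem_closure_poly φ hX b (fun k => 2 * k + 1) _ hmem
      have h0 : ((X ^ (2 * k) - X ^ (2 * l) - f : Polynomial ℤ)) • b = 0 := by
        rw [sub_smul, sub_smul, Xpow_smul φ hX, Xpow_smul φ hX, ← heq, sub_self]
      have hdvd := hb _ h0 (2 * k)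
      have hf0 : f.coeff (2 * k) = 0 := hf _ (by
        rintro ⟨j, hj⟩
        replace hj : 2 * j + 1 = 2 * k := hj
        omega)
      have h1 : (2 * k : ℕ) ≠ 2 * l := by omega
      rw [coeff_sub, coeff_sub, coeff_X_pow, coeff_X_pow, if_pos rfl, if_neg h1, hf0,
        sub_zero, sub_zero] at hdvd
      exact hone hdvd
    rcases hφ with hRIN | hLIN
    · refine hRIN Xe ?_
      refine relindex_zero_of_seq _ _ (fun k => (⇑φ)^[2 * k + 1] b) ?_ ?_
      · intro k
        have h2 : (⇑φ)^[2 * k] b ∈ Xe := AddSubgroup.subset_closure ⟨k, rfl⟩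
        have h3 : φ ((⇑φ)^[2 * k] b) ∈ Xe.map φ := AddSubgroup.mem_map_of_mem φ h2
        rw [← Function.iterate_succ_apply' φ (2 * k) b] at h3
        exact (le_sup_right : Xe.map φ ≤ Xe ⊔ Xe.map φ) h3
      · exact fun k l hkl => hne_even k l hkl
    · refine hLIN Xe ?_
      refine relindex_zero_of_seq _ _ (fun k => (⇑φ)^[2 * k] b)
        (fun k => AddSubgroup.subset_closure ⟨k, rfl⟩) ?_
      exact fun k l hkl => hne_odd k l hkl
  · push_neg at hgood
    exact hWinf' (W_finite p hpp W hWfg hWp hgood)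

end Mod

end Helpers

/-- If `φ` is an inertial or LIN endomorphism of an abelian group `A` and `a ∈ A`, then
the torsion subgroup of the smallest `φ`-invariant subgroup containing `a` (generated by
the iterates `φ^k(a)`) is finite. -/
theorem stmt_19 {A : Type*} [AddCommGroup A]
    (φ : A →+ A) (hφ : IsInertial φ ∨ IsLIN φ) (a : A) :
    {x : A | x ∈ AddSubgroup.closure (Set.range fun k : ℕ => (⇑φ)^[k] a) ∧
      ∃ n : ℕ, 0 < n ∧ n • x = 0}.Finite := by
  classical
  letI : SMul (Polynomial ℤ) A :=
    ⟨fun f x => Polynomial.aeval (φ.toIntLinearMap : Module.End ℤ A) f x⟩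
  letI : Module (Polynomial ℤ) A :=
    { smul := fun f x => Polynomial.aeval (φ.toIntLinearMap : Module.End ℤ A) f x
      one_smul := fun x => by
        show (Polynomial.aeval (φ.toIntLinearMap : Module.End ℤ A) 1) x = x
        simp
      mul_smul := fun f g x => by
        show (Polynomial.aeval (φ.toIntLinearMap : Module.End ℤ A) (f * g)) x
          = (Polynomial.aeval (φ.toIntLinearMap : Module.End ℤ A) f)
            ((Polynomial.aeval (φ.toIntLinearMap : Module.End ℤ A) g) x)
        rw [map_mul]
        rfl
      smul_zero := fun f => by
        show (Polynomial.aeval (φ.toIntLinearMap : Module.End ℤ A) f) 0 = 0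
        simp
      smul_add := fun f x y => by
        show (Polynomial.aeval (φ.toIntLinearMap : Module.End ℤ A) f) (x + y) = _ + _
        rw [map_add]
        rfl
      add_smul := fun f g x => by
        show (Polynomial.aeval (φ.toIntLinearMap : Module.End ℤ A) (f + g)) x = _ + _
        rw [map_add]
        rfl
      zero_smul := fun x => by
        show (Polynomial.aeval (φ.toIntLinearMap : Module.End ℤ A) 0) x = 0
        simp }
  have hX : ∀ x : A, (Polynomial.X : Polynomial ℤ) • x = φ x := fun x => by
    show (Polynomial.aeval (φ.toIntLinearMap : Module.End ℤ A) Polynomial.X) x = φ x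
    rw [Polynomial.aeval_X]
    rfl
  have hVset : ∀ x : A, (x ∈ AddSubgroup.closure (Set.range fun k : ℕ => (⇑φ)^[k] a) ↔
      x ∈ Submodule.span (Polynomial ℤ) ({a} : Set A)) := by
    intro x
    constructor
    · intro hx
      refine AddSubgroup.closure_induction ?_ ?_ ?_ ?_ hx
      · rintro y ⟨k, rfl⟩
        show (⇑φ)^[k] a ∈ Submodule.span (Polynomial ℤ) ({a} : Set A)
        rw [← Xpow_smul φ hX k a]
        exact Submodule.smul_mem _ _ (Submodule.mem_span_singleton_self a)
      · exact Submodule.zero_mem _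
      · exact fun u v _ _ hu hv => Submodule.add_mem _ hu hv
      · exact fun u _ hu => Submodule.neg_mem _ hu
    · intro hx
      rw [Submodule.mem_span_singleton] at hx
      obtain ⟨f, rfl⟩ := hx
      rw [smul_expand]
      refine AddSubgroup.sum_mem _ (fun i _ => AddSubgroup.zsmul_mem _ ?_ _)
      rw [Xpow_smul φ hX]
      exact AddSubgroup.subset_closure ⟨i, rfl⟩
  have hseteq : {x : A | x ∈ AddSubgroup.closure (Set.range fun k : ℕ => (⇑φ)^[k] a) ∧
        ∃ n : ℕ, 0 < n ∧ n • x = 0}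
      = {x : A | x ∈ Submodule.span (Polynomial ℤ) ({a} : Set A) ∧
        ∃ n : ℕ, 0 < n ∧ n • x = 0} :=
    Set.ext fun x => and_congr_left' (hVset x)
  rw [hseteq]
  exact main_aux φ hX hφ a
end
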